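/- arXiv:math/0406548 — 8 statements merged into one kernel-verified Lean document; each statement's English description precedes it below -/
import Mathlib

section
/- For double forms ω and θ of the same bidegree (p,q) on an oriented n-dimensional inner product space, the pointwise inner product satisfies ⟨ω,θ⟩ = *(ω·*θ), where · is the product of double forms and * is the generalized Hodge star. -/
open scoped BigOperators
open scoped Classical

noncomputable section

/-- A `(p,q)`-double form on `ℝⁿ`, given by its components with respect to the
standard orthonormal basis: a scalar-valued function of a row multi-index and a
column multi-index. -/
def DForm (n p q : ℕ) : Type := (Fin p → Fin n) → (Fin q → Fin n) → ℝ

namespace DForm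

variable {n : ℕ}

/-- Transport a double form along equalities of the bidegrees. -/
def cast' {p q p' q' : ℕ} (hp : p = p') (hq : q = q') (ω : DForm n p q) :
    DForm n p' q' :=
  fun I J => ω (fun a => I (Fin.cast hp a)) (fun b => J (Fin.cast hq b))

/-- A double form is alternating in each of its two blocks of arguments. -/
def IsAlt {p q : ℕ} (ω : DForm n p q) : Prop :=
  (∀ (σ : Equiv.Perm (Fin p)) (I : Fin p → Fin n) (J : Fin q → Fin n),
      ω (I ∘ σ) J = ((Equiv.Perm.sign σ : ℤ) : ℝ) * ω I J) ∧
  (∀ (τ : Equiv.Perm (Fin q)) (I : Fin p → Fin n) (J : Fin q → Fin n),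
      ω I (J ∘ τ) = ((Equiv.Perm.sign τ : ℤ) : ℝ) * ω I J) ∧
  (∀ (I : Fin p → Fin n) (J : Fin q → Fin n),
      (¬ Function.Injective I ∨ ¬ Function.Injective J) → ω I J = 0)

/-- A `(p,p)`-double form is symmetric. -/
def IsSym {p : ℕ} (ω : DForm n p p) : Prop := ∀ I J, ω I J = ω J I

/-- The exterior (Kulkarni–Nomizu type) product of double forms:
`(α₁⊗β₁)·(α₂⊗β₂) = (α₁∧α₂)⊗(β₁∧β₂)` in components. -/
def mul {p q r s : ℕ} (ω : DForm n p q) (θ : DForm n r s) :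
    DForm n (p + r) (q + s) :=
  fun I J =>
    (((p.factorial * r.factorial * q.factorial * s.factorial : ℕ) : ℝ))⁻¹ *
      ∑ σ : Equiv.Perm (Fin (p + r)), ∑ τ : Equiv.Perm (Fin (q + s)),
        ((Equiv.Perm.sign σ : ℤ) : ℝ) * ((Equiv.Perm.sign τ : ℤ) : ℝ) *
          ω (fun a => I (σ (Fin.castAdd r a))) (fun b => J (τ (Fin.castAdd s b))) *
          θ (fun a => I (σ (Fin.natAdd p a))) (fun b => J (τ (Fin.natAdd q b)))

/-- The contraction map `c : D^{p+1,q+1} → D^{p,q}` (trace over the orthonormal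
basis in the first slot of each block). -/
def contr {p q : ℕ} (ω : DForm n (p + 1) (q + 1)) : DForm n p q :=
  fun I J => ∑ i : Fin n, ω (Fin.cons i I) (Fin.cons i J)

/-- Total version of the contraction (zero when a bidegree is `0`). -/
def contr' : {p q : ℕ} → DForm n p q → DForm n (p - 1) (q - 1)
  | _ + 1, _ + 1, ω => contr ω
  | 0, _, _ => fun _ _ => 0
  | _ + 1, 0, _ => fun _ _ => 0

/-- Iterated contraction `c^k : D^{p+k,q+k} → D^{p,q}`. -/
def cIter {p q : ℕ} : (k : ℕ) → DForm n (p + k) (q + k) → DForm n p q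
  | 0, ω => ω
  | k + 1, ω => cIter k (contr ω)

/-- The full contraction `c^p` of a `(p,p)`-double form, a scalar. -/
def fullc {p : ℕ} (ω : DForm n p p) : ℝ :=
  cIter (p := 0) (q := 0) p
    (cast' (Nat.zero_add p).symm (Nat.zero_add p).symm ω) Fin.elim0 Fin.elim0

/-- The metric of `ℝⁿ` as a `(1,1)`-double form. -/
def gd : DForm n 1 1 := fun I J => if I 0 = J 0 then 1 else 0

/-- Powers `g^p` of the metric in the ring of double forms. -/
def gpow : (p : ℕ) → DForm n p p
  | 0 => fun _ _ => 1
  | p + 1 => mul (gpow p) gd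

/-- Powers `ω^k` of a `(p,p)`-double form in the ring of double forms. -/
def pow {p : ℕ} (ω : DForm n p p) : (k : ℕ) → DForm n (p * k) (p * k)
  | 0 => fun _ _ => 1
  | k + 1 => mul (pow ω k) ω

/-- The natural pointwise inner product on `(p,q)`-double forms. -/
def innerPQ {p q : ℕ} (ω θ : DForm n p q) : ℝ :=
  (((p.factorial * q.factorial : ℕ) : ℝ))⁻¹ *
    ∑ I : Fin p → Fin n, ∑ J : Fin q → Fin n, ω I J * θ I J

/-- The sign of the permutation of `{1,…,n}` obtained by concatenating the
multi-indices `K` and `I` (zero if it is not a permutation). -/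
def epsSign {p : ℕ} (hp : p ≤ n) (K : Fin p → Fin n) (I : Fin (n - p) → Fin n) : ℝ :=
  if h : Function.Bijective
      (fun a : Fin n => Fin.append K I (Fin.cast (by omega) a)) then
    ((Equiv.Perm.sign (Equiv.ofBijective _ h) : ℤ) : ℝ)
  else 0

/-- The generalized Hodge star operator on double forms, acting as the usual
Hodge star on each factor. -/
def hstar {p q : ℕ} (hp : p ≤ n) (hq : q ≤ n) (ω : DForm n p q) :
    DForm n (n - p) (n - q) :=
  fun I J =>
    (((p.factorial * q.factorial : ℕ) : ℝ))⁻¹ *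
      ∑ K : Fin p → Fin n, ∑ L : Fin q → Fin n,
        epsSign hp K I * epsSign hq L J * ω K L

/-- The operator `F_h` associated with a symmetric bilinear form `h`:
in an orthonormal basis diagonalizing `h` it multiplies the `(I,J)` component by
the sum of the eigenvalues of `h` over the indices in `I` and `J`.
Coordinate-free version: insert the endomorphism of `h` in each slot. -/
def Fh {p q : ℕ} (h : Fin n → Fin n → ℝ) (ω : DForm n p q) : DForm n p q :=
  fun I J =>
    (∑ k : Fin p, ∑ i : Fin n, h (I k) i * ω (Function.update I k i) J) +
    (∑ k : Fin q, ∑ i : Fin n, h (J k) i * ω I (Function.update J k i))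

/-- A bilinear form on `ℝⁿ` viewed as a `(1,1)`-double form. -/
def ofBilin (h : Fin n → Fin n → ℝ) : DForm n 1 1 := fun I J => h (I 0) (J 0)

/-- The first Bianchi identity for a `(2,2)`-double form. -/
def Bianchi1 (R : DForm n 2 2) : Prop :=
  ∀ x y z u : Fin n,
    R ![x, y] ![z, u] + R ![y, z] ![x, u] + R ![z, x] ![y, u] = 0

end DForm

end

/-! Evaluated at the empty multi-indices, the Hodge star is a signed sum over the permutations `ρ`
of `Fin n`, and the product `ω · *θ` at `ρ` is a signed sum over permutations `σ` of its
arguments. Merging `ρ` and `σ` into one permutation `μ` (and likewise `ν` in the second slot)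
expresses `*(ω · *θ)` through `ω` on the first `p` (resp. `q`) values of `μ` (resp. `ν`) times
`*θ` on the remaining ones. For alternating `θ` the latter equals `sign μ · sign ν · θ` on the
first values, so the signs cancel; and each injective multi-index is the list of first values of
exactly `(n - p)!` permutations, which absorbs the normalising factorials. -/

local notation "sgn " σ:max => ((Equiv.Perm.sign σ : ℤ) : ℝ)

namespace Equiv.Perm

section Split

variable {α β γ : Type*} (E : α ⊕ β ≃ γ)

def leftPart (μ : Perm γ) : α → γ := μ ∘ E ∘ Sum.inl

def rightPart (μ : Perm γ) : β → γ := μ ∘ E ∘ Sum.inr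

def ofLeft (π : Perm α) : Perm γ := E.permCongr (π.sumCongr 1)

def ofRight (τ : Perm β) : Perm γ := E.permCongr ((1 : Perm α).sumCongr τ)

variable {E}

@[simp]
lemma leftPart_mul_ofLeft (μ : Perm γ) (π : Perm α) :
    leftPart E (μ * ofLeft E π) = leftPart E μ ∘ π := by
  ext a; simp [leftPart, ofLeft]

@[simp]
lemma rightPart_mul_ofLeft (μ : Perm γ) (π : Perm α) :
    rightPart E (μ * ofLeft E π) = rightPart E μ := by
  ext b; simp [rightPart, ofLeft]

@[simp]
lemma leftPart_mul_ofRight (μ : Perm γ) (τ : Perm β) :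
    leftPart E (μ * ofRight E τ) = leftPart E μ := by
  ext a; simp [leftPart, ofRight]

lemma mul_ofLeft_injective (μ : Perm γ) : Function.Injective fun π => μ * ofLeft E π := by
  intro π π' h
  ext a
  simpa [ofLeft] using congr($h (E (Sum.inl a)))

lemma mul_ofRight_injective (μ : Perm γ) : Function.Injective fun τ => μ * ofRight E τ := by
  intro τ τ' h
  ext b
  simpa [ofRight] using congr($h (E (Sum.inr b)))

variable [Finite α] [Finite β]

lemma exists_eq_mul_ofLeft {ρ μ : Perm γ} (h : rightPart E ρ = rightPart E μ) :
    ∃ π, ρ = μ * ofLeft E π := by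
  set σ := E.symm.permCongr (μ⁻¹ * ρ)
  have hσ : ∀ b, σ (Sum.inr b) = Sum.inr b := fun b => by
    simpa [σ, rightPart] using congr(E.symm (μ⁻¹ ($h b)))
  have hinr : Set.MapsTo σ (Set.range Sum.inr) (Set.range Sum.inr) := by
    rintro _ ⟨b, rfl⟩; exact ⟨b, (hσ b).symm⟩
  obtain ⟨⟨π, τ⟩, hπτ⟩ := mem_sumCongrHom_range_of_perm_mapsTo_inl
    ((perm_mapsTo_inl_iff_mapsTo_inr σ).mpr hinr)
  have hτ : τ = 1 := by
    ext b; simpa [← hπτ] using hσ b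
  refine ⟨π, ?_⟩
  have : ofLeft E π = μ⁻¹ * ρ := by
    rw [ofLeft, ← hτ]
    change E.permCongr (sumCongrHom α β (π, τ)) = _
    rw [hπτ]; ext x; simp [σ]
  rw [this, mul_inv_cancel_left]

lemma exists_eq_mul_ofRight {ρ μ : Perm γ} (h : leftPart E ρ = leftPart E μ) :
    ∃ τ, ρ = μ * ofRight E τ := by
  set σ := E.symm.permCongr (μ⁻¹ * ρ)
  have hσ : ∀ a, σ (Sum.inl a) = Sum.inl a := fun a => by
    simpa [σ, leftPart] using congr(E.symm (μ⁻¹ ($h a)))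
  obtain ⟨⟨π, τ⟩, hπτ⟩ := mem_sumCongrHom_range_of_perm_mapsTo_inl (σ := σ)
    (by rintro _ ⟨a, rfl⟩; exact ⟨a, (hσ a).symm⟩)
  have hπ : π = 1 := by
    ext a; simpa [← hπτ] using hσ a
  refine ⟨τ, ?_⟩
  have : ofRight E τ = μ⁻¹ * ρ := by
    rw [ofRight, ← hπ]
    change E.permCongr (sumCongrHom α β (π, τ)) = _
    rw [hπτ]; ext x; simp [σ]
  rw [this, mul_inv_cancel_left]

end Split

section Sums

variable {α β γ : Type*} [Fintype α] [Fintype β] [Fintype γ]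
  [DecidableEq α] [DecidableEq β] [DecidableEq γ] {E : α ⊕ β ≃ γ}

@[simp]
lemma sign_ofLeft (π : Perm α) : sign (ofLeft E π) = sign π := by
  simp [ofLeft, sign_permCongr, sign_sumCongr]

lemma intCast_sign_mul_self (σ : Perm α) : sgn σ * sgn σ = 1 := by
  rw [← Int.cast_mul, ← Units.val_mul, Int.units_mul_self]; simp

lemma sum_comp_leftPart {M : Type*} [AddCommMonoid M] (G : (α → γ) → M)
    (hG : ∀ K, ¬ Function.Injective K → G K = 0) :
    ∑ μ : Perm γ, G (leftPart E μ) = Fintype.card (Perm β) • ∑ K, G K := by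
  have fiber : ∀ K, ∑ μ : Perm γ, (if leftPart E μ = K then G K else 0)
      = Fintype.card (Perm β) • G K := by
    intro K
    by_cases hK : Function.Injective K
    · obtain ⟨μ₀, hμ₀⟩ := exists_extending_pair (E ∘ Sum.inl) K
        (E.injective.comp Sum.inl_injective) hK
      have hleft : leftPart E μ₀ = K := funext hμ₀
      rw [← Fintype.sum_of_injective _ (mul_ofRight_injective (E := E) μ₀) (fun _ => G K)]
      · simp
      · intro μ hμ
        rw [if_neg]
        rintro h
        obtain ⟨τ, rfl⟩ := exists_eq_mul_ofRight (h.trans hleft.symm)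
        exact hμ ⟨τ, rfl⟩
      · simp [hleft]
    · simp [hG K hK]
  calc ∑ μ : Perm γ, G (leftPart E μ)
      = ∑ μ : Perm γ, ∑ K, if leftPart E μ = K then G K else 0 := by simp
    _ = ∑ K, Fintype.card (Perm β) • G K := by rw [Finset.sum_comm]; simp only [fiber]
    _ = _ := Finset.smul_sum.symm

lemma sum_ite_rightPart_eq (φ : (α → γ) → ℝ) (hφ : ∀ (π : Perm α) K, φ (K ∘ π) = sgn π * φ K)
    (μ : Perm γ) :
    ∑ ρ : Perm γ, (if rightPart E ρ = rightPart E μ then sgn ρ * φ (leftPart E ρ) else 0)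
      = Fintype.card (Perm α) * (sgn μ * φ (leftPart E μ)) := by
  rw [← Fintype.sum_of_injective _ (mul_ofLeft_injective (E := E) μ)
    (fun _ => sgn μ * φ (leftPart E μ))]
  · simp
  · intro ρ hρ
    rw [if_neg]
    rintro h
    obtain ⟨π, rfl⟩ := exists_eq_mul_ofLeft h
    exact hρ ⟨π, rfl⟩
  · intro π
    simp [hφ, ← mul_assoc, mul_assoc _ (sgn π), intCast_sign_mul_self]

lemma sum_sign_mul_sign_comp (e : α ≃ γ) (F : (α → γ) → ℝ) :
    ∑ ρ : Perm γ, ∑ σ : Perm α, sgn ρ * sgn σ * F (ρ ∘ e ∘ σ)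
      = Fintype.card (Perm α) * ∑ μ : Perm γ, sgn μ * F (μ ∘ e) := by
  rw [Finset.sum_comm]
  have key : ∀ σ : Perm α, ∑ ρ : Perm γ, sgn ρ * sgn σ * F (ρ ∘ e ∘ σ)
      = ∑ μ : Perm γ, sgn μ * F (μ ∘ e) := fun σ =>
    Fintype.sum_equiv (Equiv.mulRight (e.permCongr σ)) _ _ fun ρ => by
      simp only [coe_mulRight, sign_mul, sign_permCongr, Units.val_mul, Int.cast_mul]
      congr 2; ext; simp
  simp [key]

lemma dite_bijective_sign_eq_sum (f : γ → γ) :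
    (if h : Function.Bijective f then sgn (Equiv.ofBijective f h) else 0)
      = ∑ ρ : Perm γ, if ⇑ρ = f then sgn ρ else 0 := by
  split_ifs with h
  · rw [Fintype.sum_eq_single (Equiv.ofBijective f h)]
    · simp
    · intro ρ hρ
      rw [if_neg]
      contrapose! hρ
      ext; simp [hρ]
  · refine (Finset.sum_eq_zero fun ρ _ => if_neg ?_).symm
    rintro rfl
    exact h ρ.bijective

end Sums

end Equiv.Perm

namespace DForm

open Equiv Perm

variable {n : ℕ}

def finSumEquivOfAdd {p r : ℕ} (h : p + r = n) : Fin p ⊕ Fin r ≃ Fin n :=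
  finSumFinEquiv.trans (finCongr h)

abbrev finSumEquivOfLE {p : ℕ} (hp : p ≤ n) : Fin p ⊕ Fin (n - p) ≃ Fin n :=
  finSumEquivOfAdd (Nat.add_sub_cancel' hp)

lemma epsSign_eq_sum {p : ℕ} (hp : p ≤ n) (K : Fin p → Fin n) (I : Fin (n - p) → Fin n) :
    epsSign hp K I = ∑ ρ : Perm (Fin n),
      if leftPart (finSumEquivOfLE hp) ρ = K ∧
        rightPart (finSumEquivOfLE hp) ρ = I then sgn ρ else 0 := by
  rw [epsSign, dite_bijective_sign_eq_sum]
  refine Finset.sum_congr rfl fun ρ _ => if_congr ?_ rfl rfl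
  constructor
  · intro h
    constructor <;> ext <;> simp [leftPart, rightPart, finSumEquivOfAdd, h]
  · rintro ⟨rfl, rfl⟩
    ext a
    obtain ⟨x | x, rfl⟩ := (finSumEquivOfLE hp).surjective a <;>
      simp [leftPart, rightPart, finSumEquivOfAdd]

lemma sum_epsSign_mul {p : ℕ} (hp : p ≤ n) (I : Fin (n - p) → Fin n)
    (φ : (Fin p → Fin n) → ℝ) :
    ∑ K, epsSign hp K I * φ K = ∑ ρ : Perm (Fin n),
      if rightPart (finSumEquivOfLE hp) ρ = I then
        sgn ρ * φ (leftPart (finSumEquivOfLE hp) ρ) else 0 := by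
  simp only [epsSign_eq_sum, Finset.sum_mul, ite_mul, zero_mul]
  rw [Finset.sum_comm]
  refine Finset.sum_congr rfl fun ρ _ => ?_
  split_ifs with h <;> simp [h]

lemma sum_epsSign_rightPart_mul {p : ℕ} (hp : p ≤ n) (μ : Perm (Fin n))
    (φ : (Fin p → Fin n) → ℝ) (hφ : ∀ (π : Perm (Fin p)) K, φ (K ∘ π) = sgn π * φ K) :
    ∑ K, epsSign hp K (rightPart (finSumEquivOfLE hp) μ) * φ K
      = p.factorial * (sgn μ * φ (leftPart (finSumEquivOfLE hp) μ)) := by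
  rw [sum_epsSign_mul, sum_ite_rightPart_eq φ hφ, Fintype.card_perm, Fintype.card_fin]

lemma hstar_apply_rightPart {p q : ℕ} (hp : p ≤ n) (hq : q ≤ n) (θ : DForm n p q)
    (hθ₁ : ∀ (π : Perm (Fin p)) I J, θ (I ∘ π) J = sgn π * θ I J)
    (hθ₂ : ∀ (τ : Perm (Fin q)) I J, θ I (J ∘ τ) = sgn τ * θ I J) (μ ν : Perm (Fin n)) :
    hstar hp hq θ (rightPart (finSumEquivOfLE hp) μ) (rightPart (finSumEquivOfLE hq) ν)
      = sgn μ * sgn ν *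
          θ (leftPart (finSumEquivOfLE hp) μ) (leftPart (finSumEquivOfLE hq) ν) := by
  have inner : ∀ K, ∑ L, epsSign hq L (rightPart (finSumEquivOfLE hq) ν) * θ K L
      = q.factorial * (sgn ν * θ K (leftPart (finSumEquivOfLE hq) ν)) :=
    fun K => sum_epsSign_rightPart_mul hq ν (θ K) fun τ L => hθ₂ τ K L
  simp only [hstar, mul_assoc, ← Finset.mul_sum, inner]
  rw [sum_epsSign_rightPart_mul hp μ _ fun π K => by rw [hθ₁]; ring]
  have : (p.factorial : ℝ) ≠ 0 := by positivity
  have : (q.factorial : ℝ) ≠ 0 := by positivity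
  push_cast
  field_simp

lemma sum_epsSign_mul_of_eq {N : ℕ} (hN : N = n) (I : Fin (n - N) → Fin n)
    (φ : (Fin N → Fin n) → ℝ) :
    ∑ K, epsSign hN.le K I * φ K = ∑ ρ : Perm (Fin n), sgn ρ * φ (ρ ∘ finCongr hN) := by
  rw [sum_epsSign_mul]
  refine Finset.sum_congr rfl fun ρ _ => ?_
  rw [if_pos (funext fun b => absurd b.isLt (by omega))]
  congr 3

lemma hstar_apply_of_eq {N M : ℕ} (hN : N = n) (hM : M = n) (χ : DForm n N M)
    (I : Fin (n - N) → Fin n) (J : Fin (n - M) → Fin n) :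
    hstar hN.le hM.le χ I J = ((N.factorial * M.factorial : ℕ) : ℝ)⁻¹ *
      ∑ ρ : Perm (Fin n), ∑ ρ' : Perm (Fin n),
        sgn ρ * sgn ρ' * χ (ρ ∘ finCongr hN) (ρ' ∘ finCongr hM) := by
  simp only [hstar]
  congr 1
  calc ∑ K, ∑ L, epsSign hN.le K I * epsSign hM.le L J * χ K L
      = ∑ K, epsSign hN.le K I * ∑ L, epsSign hM.le L J * χ K L :=
        Finset.sum_congr rfl fun K _ => by rw [Finset.mul_sum]; simp only [mul_assoc]
    _ = ∑ K, epsSign hN.le K I * ∑ ρ' : Perm (Fin n), sgn ρ' * χ K (ρ' ∘ finCongr hM) :=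
        Finset.sum_congr rfl fun K _ => by rw [sum_epsSign_mul_of_eq hM]
    _ = _ := by
        rw [sum_epsSign_mul_of_eq hN]
        simp only [Finset.mul_sum, mul_assoc]

lemma sum_sign_mul_sign_mul_apply {p q r s : ℕ} (hN : p + r = n) (hM : q + s = n)
    (ω : DForm n p q) (Θ : DForm n r s) :
    ∑ ρ : Perm (Fin n), ∑ ρ' : Perm (Fin n),
        sgn ρ * sgn ρ' * mul ω Θ (ρ ∘ finCongr hN) (ρ' ∘ finCongr hM)
      = ((p.factorial * r.factorial * q.factorial * s.factorial : ℕ) : ℝ)⁻¹ *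
        ((p + r).factorial * ((q + s).factorial *
          ∑ μ : Perm (Fin n), ∑ ν : Perm (Fin n), sgn μ * sgn ν *
            (ω (leftPart (finSumEquivOfAdd hN) μ) (leftPart (finSumEquivOfAdd hM) ν) *
              Θ (rightPart (finSumEquivOfAdd hN) μ) (rightPart (finSumEquivOfAdd hM) ν)))) := by
  set c : ℝ := ((p.factorial * r.factorial * q.factorial * s.factorial : ℕ) : ℝ)⁻¹
  set F : (Fin (p + r) → Fin n) → (Fin (q + s) → Fin n) → ℝ := fun g g' =>
    ω (g ∘ Fin.castAdd r) (g' ∘ Fin.castAdd s) * Θ (g ∘ Fin.natAdd p) (g' ∘ Fin.natAdd q)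
  have hmul : ∀ K L, mul ω Θ K L = c * ∑ σ : Perm (Fin (p + r)), ∑ τ : Perm (Fin (q + s)),
      sgn σ * sgn τ * F (K ∘ σ) (L ∘ τ) := fun K L => by
    simp only [mul, F]
    congr 1
    simp only [mul_assoc]
    rfl
  have merge : ∀ (G : (Fin (q + s) → Fin n) → ℝ),
      ∑ ρ' : Perm (Fin n), ∑ τ : Perm (Fin (q + s)), sgn ρ' * sgn τ * G (ρ' ∘ finCongr hM ∘ τ)
        = (q + s).factorial * ∑ ν : Perm (Fin n), sgn ν * G (ν ∘ finCongr hM) := fun G => by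
    rw [sum_sign_mul_sign_comp, Fintype.card_perm, Fintype.card_fin]
  calc _ = c * ∑ ρ : Perm (Fin n), ∑ σ : Perm (Fin (p + r)), sgn ρ * sgn σ *
        ∑ ρ' : Perm (Fin n), ∑ τ : Perm (Fin (q + s)), sgn ρ' * sgn τ *
          F (ρ ∘ finCongr hN ∘ σ) (ρ' ∘ finCongr hM ∘ τ) := by
        simp only [hmul, Finset.mul_sum]
        refine Finset.sum_congr rfl fun ρ _ => ?_
        rw [Finset.sum_comm]
        refine Finset.sum_congr rfl fun σ _ => Finset.sum_congr rfl fun ρ' _ =>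
          Finset.sum_congr rfl fun τ _ => ?_
        simp only [Function.comp_assoc]
        ring
    _ = c * ((p + r).factorial * ∑ μ : Perm (Fin n), sgn μ *
          ((q + s).factorial * ∑ ν : Perm (Fin n), sgn ν *
            F (μ ∘ finCongr hN) (ν ∘ finCongr hM))) := by
        simp only [merge]
        rw [sum_sign_mul_sign_comp (finCongr hN) fun g => (q + s).factorial *
          ∑ ν : Perm (Fin n), sgn ν * F g (ν ∘ finCongr hM), Fintype.card_perm, Fintype.card_fin]
    _ = _ := by
        have hF : ∀ μ ν : Perm (Fin n), F (μ ∘ finCongr hN) (ν ∘ finCongr hM)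
            = ω (leftPart (finSumEquivOfAdd hN) μ) (leftPart (finSumEquivOfAdd hM) ν) *
              Θ (rightPart (finSumEquivOfAdd hN) μ) (rightPart (finSumEquivOfAdd hM) ν) :=
          fun _ _ => rfl
        simp only [hF, Finset.mul_sum]
        refine Finset.sum_congr rfl fun μ _ => Finset.sum_congr rfl fun ν _ => ?_
        ring

lemma sum_sign_mul_sign_mul_hstar_apply_rightPart {p q : ℕ} (hp : p ≤ n) (hq : q ≤ n)
    (ω θ : DForm n p q)
    (hω₀ : ∀ I J, ¬ Function.Injective I ∨ ¬ Function.Injective J → ω I J = 0)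
    (hθ₁ : ∀ (π : Perm (Fin p)) I J, θ (I ∘ π) J = sgn π * θ I J)
    (hθ₂ : ∀ (τ : Perm (Fin q)) I J, θ I (J ∘ τ) = sgn τ * θ I J) :
    ∑ μ : Perm (Fin n), ∑ ν : Perm (Fin n), sgn μ * sgn ν *
      (ω (leftPart (finSumEquivOfLE hp) μ) (leftPart (finSumEquivOfLE hq) ν) *
        hstar hp hq θ (rightPart (finSumEquivOfLE hp) μ) (rightPart (finSumEquivOfLE hq) ν))
      = (n - p).factorial * ((n - q).factorial * ∑ I, ∑ J, ω I J * θ I J) := by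
  set E := finSumEquivOfLE hp
  set E' := finSumEquivOfLE hq
  calc _ = ∑ μ : Perm (Fin n), ∑ ν : Perm (Fin n),
        ω (leftPart E μ) (leftPart E' ν) * θ (leftPart E μ) (leftPart E' ν) := by
        refine Finset.sum_congr rfl fun μ _ => Finset.sum_congr rfl fun ν _ => ?_
        rw [hstar_apply_rightPart hp hq θ hθ₁ hθ₂]
        linear_combination ω (leftPart E μ) (leftPart E' ν) * θ (leftPart E μ) (leftPart E' ν) *
          (sgn ν * sgn ν * intCast_sign_mul_self μ + intCast_sign_mul_self ν)
    _ = ∑ μ : Perm (Fin n), (n - q).factorial *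
          ∑ J, ω (leftPart E μ) J * θ (leftPart E μ) J := by
        refine Finset.sum_congr rfl fun μ _ => ?_
        rw [sum_comp_leftPart (fun J => ω (leftPart E μ) J * θ (leftPart E μ) J)
          fun J hJ => by rw [hω₀ _ _ (.inr hJ), zero_mul]]
        simp [Fintype.card_perm]
    _ = _ := by
        rw [sum_comp_leftPart (fun I => (n - q).factorial * ∑ J, ω I J * θ I J)
          fun I hI => by simp [hω₀ _ _ (.inl hI)]]
        simp [Fintype.card_perm, Finset.mul_sum]

end DForm

open Equiv Perm DForm in
/-- For alternating `(p,q)`-double forms `ω, θ`, the pointwise inner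
product satisfies `⟨ω,θ⟩ = *(ω·*θ)`, where the `(n,n)`-double form `ω·*θ` is
identified with a scalar by the generalized Hodge star. -/
theorem inner_eq_star_mul_star {n p q : ℕ} (hp : p ≤ n) (hq : q ≤ n)
    (ω θ : DForm n p q) (hω : DForm.IsAlt ω) (hθ : DForm.IsAlt θ) :
    DForm.innerPQ ω θ =
      DForm.cast' (by omega) (by omega)
        (DForm.hstar (n := n) (by omega) (by omega)
          (DForm.mul ω (DForm.hstar hp hq θ)))
        Fin.elim0 Fin.elim0 := by
  obtain ⟨-, -, hω₀⟩ := hω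
  obtain ⟨hθ₁, hθ₂, -⟩ := hθ
  simp only [cast']
  rw [hstar_apply_of_eq (Nat.add_sub_cancel' hp) (Nat.add_sub_cancel' hq),
    sum_sign_mul_sign_mul_apply,
    sum_sign_mul_sign_mul_hstar_apply_rightPart hp hq ω θ hω₀ hθ₁ hθ₂, innerPQ]
  have : ((n - p).factorial : ℝ) ≠ 0 := by positivity
  have : ((n - q).factorial : ℝ) ≠ 0 := by positivity
  push_cast
  field_simp
end

section
/- Multiplication by the metric g and the contraction c are adjoint with respect to the pointwise inner product on double forms: ⟨gω₁, ω₂⟩ = ⟨ω₁, cω₂⟩ for all double forms ω₁ of bidegree (p,q) and ω₂ of bidegree (p+1,q+1). -/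
open scoped BigOperators
open scoped Classical

/-!
The product `g ω₁` is the alternation of the plain tensor product `g ⊗ ω₁`. Alternation is
self-adjoint for the pairing and acts on the alternating form `ω₂` as multiplication by
`(p+1)! (q+1)!`, cancelling the normalisation of the inner product in bidegree
`(p+1, q+1)`. So `⟨g ω₁, ω₂⟩` is the pairing of `g ⊗ ω₁` with `ω₂`, in which `g` traces
the first index pair of `ω₂`: that is `⟨ω₁, c ω₂⟩`.
-/

namespace DForm

open Equiv Finset

variable {n : ℕ}

theorem sum_comp_perm {m : ℕ} (σ : Perm (Fin m)) (f : (Fin m → Fin n) → ℝ) :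
    ∑ I : Fin m → Fin n, f (I ∘ σ) = ∑ I, f I :=
  (σ.symm.arrowCongr (Equiv.refl (Fin n))).sum_comp f

theorem sum_alternate_mul {m : ℕ} (f g : (Fin m → Fin n) → ℝ)
    (hg : ∀ (σ : Perm (Fin m)) I, g (I ∘ σ) = ((Perm.sign σ : ℤ) : ℝ) * g I) :
    ∑ I, (∑ σ : Perm (Fin m), ((Perm.sign σ : ℤ) : ℝ) * f (I ∘ σ)) * g I =
      m.factorial * ∑ I, f I * g I := by
  have term : ∀ σ : Perm (Fin m),
      ∑ I, ((Perm.sign σ : ℤ) : ℝ) * f (I ∘ σ) * g I = ∑ I, f I * g I := fun σ => by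
    rw [← sum_comp_perm σ (fun I => f I * g I)]
    exact sum_congr rfl fun I _ => by rw [hg]; ring
  simp_rw [sum_mul]
  rw [sum_comm]
  simp_rw [term, sum_const, card_univ, Fintype.card_perm, Fintype.card_fin, nsmul_eq_mul]

theorem IsAlt.sum_alternate_mul {m k : ℕ} {W : DForm n m k} (hW : W.IsAlt) (F : DForm n m k) :
    ∑ I, ∑ J, (∑ σ : Perm (Fin m), ∑ τ : Perm (Fin k),
        ((Perm.sign σ : ℤ) : ℝ) * ((Perm.sign τ : ℤ) : ℝ) * F (I ∘ σ) (J ∘ τ)) * W I J =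
      m.factorial * k.factorial * ∑ I, ∑ J, F I J * W I J := by
  obtain ⟨hrow, hcol, -⟩ := hW
  let G : (Fin k → Fin n) → DForm n m k := fun J I' J' =>
    ∑ τ : Perm (Fin k), ((Perm.sign τ : ℤ) : ℝ) * F I' (J' ∘ τ)
  calc _ = ∑ J, ∑ I, (∑ σ : Perm (Fin m), ((Perm.sign σ : ℤ) : ℝ) * G J (I ∘ σ) J) * W I J := by
        rw [sum_comm]
        simp only [G, mul_sum, mul_assoc]
    _ = m.factorial * ∑ I, ∑ J, (∑ τ : Perm (Fin k), ((Perm.sign τ : ℤ) : ℝ) * F I (J ∘ τ)) *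
          W I J := by
        simp_rw [fun J => DForm.sum_alternate_mul (G J · J) (W · J) fun σ I => hrow σ I J]
        rw [← mul_sum, sum_comm]
    _ = _ := by
        simp_rw [fun I => DForm.sum_alternate_mul (F I) (W I) fun τ J => hcol τ I J, mul_sum,
          mul_assoc]

theorem sum_append {p r : ℕ} (f : (Fin (p + r) → Fin n) → ℝ) :
    ∑ I, f I = ∑ I₁ : Fin p → Fin n, ∑ I₂ : Fin r → Fin n, f (Fin.append I₁ I₂) := by
  rw [← (Fin.appendEquiv p r).sum_comp, Fintype.sum_prod_type]
  rfl

theorem innerPQ_mul_of_isAlt {p q r s : ℕ} (α : DForm n p q) (β : DForm n r s)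
    {W : DForm n (p + r) (q + s)} (hW : W.IsAlt) :
    innerPQ (mul α β) W = ((p.factorial * r.factorial * q.factorial * s.factorial : ℕ) : ℝ)⁻¹ *
      ∑ I₁, ∑ J₁, ∑ I₂, ∑ J₂,
        α I₁ J₁ * β I₂ J₂ * W (Fin.append I₁ I₂) (Fin.append J₁ J₂) := by
  let F : DForm n (p + r) (q + s) := fun I J =>
    α (fun a => I (Fin.castAdd r a)) (fun b => J (Fin.castAdd s b)) *
      β (fun a => I (Fin.natAdd p a)) (fun b => J (Fin.natAdd q b))
  have hmul : ∀ I J, mul α β I J =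
      ((p.factorial * r.factorial * q.factorial * s.factorial : ℕ) : ℝ)⁻¹ *
        ∑ σ : Perm (Fin (p + r)), ∑ τ : Perm (Fin (q + s)),
          ((Perm.sign σ : ℤ) : ℝ) * ((Perm.sign τ : ℤ) : ℝ) * F (I ∘ σ) (J ∘ τ) := fun I J => by
    simp only [mul, F, Function.comp_apply, mul_assoc]
  have hsum : ∑ I, ∑ J, mul α β I J * W I J =
      ((p.factorial * r.factorial * q.factorial * s.factorial : ℕ) : ℝ)⁻¹ *
        ((p + r).factorial * (q + s).factorial * ∑ I, ∑ J, F I J * W I J) := by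
    rw [← hW.sum_alternate_mul F, mul_sum]
    refine sum_congr rfl fun I _ => ?_
    rw [mul_sum]
    exact sum_congr rfl fun J _ => by rw [hmul, mul_assoc]
  have hsplit : ∑ I, ∑ J, F I J * W I J = ∑ I₁, ∑ J₁, ∑ I₂, ∑ J₂,
      α I₁ J₁ * β I₂ J₂ * W (Fin.append I₁ I₂) (Fin.append J₁ J₂) := by
    simp_rw [sum_append (p := p) (r := r), sum_append (p := q) (r := s)]
    refine sum_congr rfl fun I₁ _ => ?_
    rw [sum_comm]
    simp only [F, Fin.append_left, Fin.append_right]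
  rw [innerPQ, hsum, hsplit]
  push_cast
  field_simp

theorem sum_gd_mul (f : (Fin 1 → Fin n) → (Fin 1 → Fin n) → ℝ) :
    ∑ I, ∑ J, gd I J * f I J = ∑ i, f (fun _ => i) (fun _ => i) := by
  simp only [← (Equiv.funUnique (Fin 1) (Fin n)).symm.sum_comp, gd, funUnique_symm_apply,
    uniqueElim_const, ite_mul, one_mul, zero_mul, sum_ite_eq, mem_univ, if_true]
  rfl

theorem IsAlt.cast' {p q p' q' : ℕ} (hp : p = p') (hq : q = q') {ω : DForm n p q}
    (h : ω.IsAlt) : (DForm.cast' hp hq ω).IsAlt := by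
  subst hp hq
  exact h

theorem cast'_append_fin_one {p q : ℕ} (hp : p + 1 = 1 + p) (hq : q + 1 = 1 + q)
    (ω : DForm n (p + 1) (q + 1)) (i j : Fin n) (I : Fin p → Fin n) (J : Fin q → Fin n) :
    DForm.cast' hp hq ω (Fin.append (fun _ => i) I) (Fin.append (fun _ => j) J) =
      ω (Fin.cons i I) (Fin.cons j J) := by
  simp only [DForm.cast', Fin.append_left_eq_cons]
  rfl

end DForm

/-- Multiplication by the metric `g` and the contraction `c` are
adjoint with respect to the pointwise inner product on double forms:
`⟨gω₁, ω₂⟩ = ⟨ω₁, cω₂⟩`. -/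
theorem g_contr_adjoint {n p q : ℕ} (ω₁ : DForm n p q) (ω₂ : DForm n (p + 1) (q + 1))
    (h₂ : DForm.IsAlt ω₂) :
    DForm.innerPQ (DForm.mul DForm.gd ω₁) (DForm.cast' (by omega) (by omega) ω₂) =
      DForm.innerPQ ω₁ (DForm.contr ω₂) := by
  rw [DForm.innerPQ_mul_of_isAlt _ _ (h₂.cast' _ _)]
  simp only [mul_assoc, ← Finset.mul_sum, DForm.sum_gd_mul, DForm.cast'_append_fin_one,
    DForm.innerPQ, DForm.contr, Nat.factorial_one, one_mul]
  simp only [Finset.mul_sum]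
  rw [Finset.sum_comm]
  exact Finset.sum_congr rfl fun I _ => Finset.sum_comm
end

section
/- Let h be a symmetric bilinear form on an n-dimensional inner product space. Then F_h(ω^k) = k·ω^{k-1}·F_h(ω) for any symmetric (p,p)-double form ω and any positive integer k, where powers are taken in the ring of double forms. -/
/-!
`F_h` is a derivation of the ring of double forms: the product `ω · θ` is a multiple of the
antisymmetrization `Alt(ω ⊗ θ)`, `F_h` commutes with `Alt`, and on `ω ⊗ θ` it inserts `h` into
the slots of `ω` and of `θ` separately, so `F_h(ω · θ) = F_h(ω) · θ + ω · F_h(θ)`. Two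
`(p,p)`-factors of a product commute: exchanging them permutes the rows and the columns by the
same block swap, whose sign therefore cancels. By induction on `k`,
`F_h(ω^{k+1}) = F_h(ω^k) · ω + ω^k · F_h(ω) = k ω^{k-1} F_h(ω) · ω + ω^k F_h(ω) = (k+1) ω^k F_h(ω)`.
-/

open scoped BigOperators
open scoped Classical

namespace DForm

open Equiv Finset

variable {n : ℕ}

instance {p q : ℕ} : AddCommGroup (DForm n p q) :=
  inferInstanceAs (AddCommGroup ((Fin p → Fin n) → (Fin q → Fin n) → ℝ))

instance {p q : ℕ} : Module ℝ (DForm n p q) :=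
  inferInstanceAs (Module ℝ ((Fin p → Fin n) → (Fin q → Fin n) → ℝ))

section Apply

variable {p q : ℕ} (I : Fin p → Fin n) (J : Fin q → Fin n)

@[simp] lemma zero_apply : (0 : DForm n p q) I J = 0 := rfl

@[simp] lemma add_apply (ω θ : DForm n p q) : (ω + θ) I J = ω I J + θ I J := rfl

@[simp] lemma smul_apply (c : ℝ) (ω : DForm n p q) : (c • ω) I J = c * ω I J := rfl

end Apply

local notation:max "ε" σ:max => ((Perm.sign σ : ℤ) : ℝ)

lemma sign_mul_self_real {α : Type*} [DecidableEq α] [Fintype α] (σ : Perm α) :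
    ε σ * ε σ = 1 := by
  rw [← Int.cast_mul, ← Units.val_mul, Int.units_mul_self, Units.val_one, Int.cast_one]

section Tensor

variable {p q r s : ℕ}

def tensor (ω : DForm n p q) (θ : DForm n r s) : DForm n (p + r) (q + s) :=
  fun I J => ω (I ∘ Fin.castAdd r) (J ∘ Fin.castAdd s) * θ (I ∘ Fin.natAdd p) (J ∘ Fin.natAdd q)

def alt (ω : DForm n p q) : DForm n p q :=
  fun I J => ∑ g : Perm (Fin p) × Perm (Fin q), ε g.1 * ε g.2 * ω (I ∘ g.1) (J ∘ g.2)

lemma mul_eq_smul_alt_tensor (ω : DForm n p q) (θ : DForm n r s) :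
    mul ω θ =
      (((p.factorial * r.factorial * q.factorial * s.factorial : ℕ) : ℝ))⁻¹ • alt (tensor ω θ) := by
  funext I J
  simp only [mul, alt, tensor, smul_apply, Fintype.sum_prod_type, mul_assoc]
  rfl

lemma alt_add (ω θ : DForm n p q) : alt (ω + θ) = alt ω + alt θ := by
  funext I J
  simp only [alt, add_apply, mul_add, sum_add_distrib]

lemma alt_smul (c : ℝ) (ω : DForm n p q) : alt (c • ω) = c • alt ω := by
  funext I J
  simp only [alt, smul_apply, mul_sum]
  exact Fintype.sum_congr _ _ fun _ => by ring

lemma tensor_smul_left (c : ℝ) (ω : DForm n p q) (θ : DForm n r s) :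
    tensor (c • ω) θ = c • tensor ω θ := by
  funext I J
  simp only [tensor, smul_apply, mul_assoc]

lemma alt_comp (ω : DForm n p q) (σ : Perm (Fin p)) (τ : Perm (Fin q)) :
    alt (fun I J => ω (I ∘ σ) (J ∘ τ)) = (ε σ * ε τ) • alt ω := by
  funext I J
  simp only [alt, smul_apply, mul_sum]
  conv_rhs => rw [← Equiv.sum_comp (Equiv.mulRight (σ, τ))]
  refine Fintype.sum_congr _ _ fun g => ?_
  simp only [coe_mulRight, Prod.fst_mul, Prod.snd_mul, Perm.coe_mul, Perm.sign_mul,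
    Units.val_mul, Int.cast_mul,
    Function.comp_assoc]
  linear_combination (-(ε g.1 * ε g.2 * ω (I ∘ g.1 ∘ σ) (J ∘ g.2 ∘ τ)) * ε τ * ε τ) *
    sign_mul_self_real σ - ε g.1 * ε g.2 * ω (I ∘ g.1 ∘ σ) (J ∘ g.2 ∘ τ) * sign_mul_self_real τ

def permCastAdd (r : ℕ) (σ : Perm (Fin p)) : Perm (Fin (p + r)) :=
  finSumFinEquiv.permCongr (σ.sumCongr (Equiv.refl (Fin r)))

lemma permCastAdd_comp_castAdd (σ : Perm (Fin p)) :
    ⇑(permCastAdd r σ) ∘ Fin.castAdd r = Fin.castAdd r ∘ σ := by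
  funext a
  simp [permCastAdd, Equiv.permCongr_apply]

lemma permCastAdd_comp_natAdd (σ : Perm (Fin p)) :
    ⇑(permCastAdd r σ) ∘ Fin.natAdd p = Fin.natAdd p := by
  funext a
  simp [permCastAdd, Equiv.permCongr_apply]

lemma sign_permCastAdd (σ : Perm (Fin p)) : Perm.sign (permCastAdd r σ) = Perm.sign σ := by
  simp [permCastAdd, Perm.sign_permCongr, Perm.sign_sumCongr]

lemma tensor_apply_comp_permCastAdd (ω : DForm n p q) (θ : DForm n r s)
    (σ : Perm (Fin p)) (τ : Perm (Fin q)) (I : Fin (p + r) → Fin n) (J : Fin (q + s) → Fin n) :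
    tensor ω θ (I ∘ permCastAdd r σ) (J ∘ permCastAdd s τ) =
      ω (I ∘ Fin.castAdd r ∘ σ) (J ∘ Fin.castAdd s ∘ τ) *
        θ (I ∘ Fin.natAdd p) (J ∘ Fin.natAdd q) := by
  simp only [tensor, Function.comp_assoc, permCastAdd_comp_castAdd, permCastAdd_comp_natAdd]

lemma tensor_alt_left_apply (ω : DForm n p q) (θ : DForm n r s)
    (I : Fin (p + r) → Fin n) (J : Fin (q + s) → Fin n) :
    tensor (alt ω) θ I J = ∑ g : Perm (Fin p) × Perm (Fin q),
      ε g.1 * ε g.2 * tensor ω θ (I ∘ permCastAdd r g.1) (J ∘ permCastAdd s g.2) := by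
  simp only [tensor_apply_comp_permCastAdd]
  simp only [tensor, alt, sum_mul, mul_assoc]
  rfl

lemma alt_tensor_alt_left (ω : DForm n p q) (θ : DForm n r s) :
    alt (tensor (alt ω) θ) = ((p.factorial * q.factorial : ℕ) : ℝ) • alt (tensor ω θ) := by
  funext I J
  have inner (g' : Perm (Fin p) × Perm (Fin q)) :
      ∑ g : Perm (Fin (p + r)) × Perm (Fin (q + s)),
        ε g.1 * ε g.2 *
          tensor ω θ (I ∘ g.1 ∘ permCastAdd r g'.1) (J ∘ g.2 ∘ permCastAdd s g'.2) =
      ε g'.1 * ε g'.2 * alt (tensor ω θ) I J :=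
    (congrFun₂ (alt_comp (tensor ω θ) (permCastAdd r g'.1) (permCastAdd s g'.2)) I J).trans
      (by rw [smul_apply, sign_permCastAdd, sign_permCastAdd])
  calc alt (tensor (alt ω) θ) I J
      = ∑ g : Perm (Fin (p + r)) × Perm (Fin (q + s)), ε g.1 * ε g.2 *
          ∑ g' : Perm (Fin p) × Perm (Fin q), ε g'.1 * ε g'.2 *
            tensor ω θ (I ∘ g.1 ∘ permCastAdd r g'.1) (J ∘ g.2 ∘ permCastAdd s g'.2) :=
        Fintype.sum_congr _ _ fun g => by rw [tensor_alt_left_apply]; rfl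
    _ = ∑ g' : Perm (Fin p) × Perm (Fin q),
          ε g'.1 * ε g'.2 * (ε g'.1 * ε g'.2 * alt (tensor ω θ) I J) := by
        simp only [mul_sum, ← inner]
        rw [sum_comm]
        exact Fintype.sum_congr _ _ fun g' => Fintype.sum_congr _ _ fun g => by ring
    _ = _ := by
        simp only [← mul_assoc, mul_mul_mul_comm _ (ε _), sign_mul_self_real, one_mul, sum_const,
          card_univ, Fintype.card_prod, Fintype.card_perm, Fintype.card_fin, smul_apply,
          nsmul_eq_mul]

lemma mul_mul_eq_smul_alt {p₁ q₁ p₂ q₂ p₃ q₃ : ℕ}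
    (A : DForm n p₁ q₁) (B : DForm n p₂ q₂) (C : DForm n p₃ q₃) :
    mul (mul A B) C = (((p₁.factorial * p₂.factorial * p₃.factorial *
      q₁.factorial * q₂.factorial * q₃.factorial : ℕ) : ℝ))⁻¹ • alt (tensor (tensor A B) C) := by
  rw [mul_eq_smul_alt_tensor, mul_eq_smul_alt_tensor, tensor_smul_left, alt_smul,
    alt_tensor_alt_left, smul_smul, smul_smul]
  congr 1
  push_cast
  field_simp

protected lemma smul_mul (c : ℝ) (ω : DForm n p q) (θ : DForm n r s) :
    mul (c • ω) θ = c • mul ω θ := by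
  rw [mul_eq_smul_alt_tensor, mul_eq_smul_alt_tensor, tensor_smul_left, alt_smul, smul_comm]

protected lemma zero_mul (θ : DForm n r s) : mul (0 : DForm n p q) θ = 0 := by
  simpa using DForm.smul_mul 0 0 θ

protected lemma pow_succ (ω : DForm n p p) (k : ℕ) : pow ω (k + 1) = mul (pow ω k) ω :=
  rfl

def blockSwap (r p : ℕ) : Perm (Fin (r + p + p)) :=
  (finSumFinEquiv.symm.trans ((finSumFinEquiv.symm.sumCongr (Equiv.refl _)).trans
    (Equiv.sumAssoc _ _ _))).symm.permCongr
      ((Equiv.refl (Fin r)).sumCongr (Equiv.sumComm (Fin p) (Fin p)))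

lemma blockSwap_comp_castAdd_castAdd :
    ⇑(blockSwap r p) ∘ Fin.castAdd p ∘ Fin.castAdd p = Fin.castAdd p ∘ Fin.castAdd p := by
  funext a
  simp [blockSwap, Equiv.permCongr_apply]

lemma blockSwap_comp_castAdd_natAdd :
    ⇑(blockSwap r p) ∘ Fin.castAdd p ∘ Fin.natAdd r = Fin.natAdd (r + p) := by
  funext a
  simp [blockSwap, Equiv.permCongr_apply]

lemma blockSwap_comp_natAdd :
    ⇑(blockSwap r p) ∘ Fin.natAdd (r + p) = Fin.castAdd p ∘ Fin.natAdd r := by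
  funext a
  simp [blockSwap, Equiv.permCongr_apply]

lemma sign_blockSwap :
    Perm.sign (blockSwap r p) = Perm.sign (Equiv.sumComm (Fin p) (Fin p)) := by
  simp [blockSwap, Perm.sign_permCongr, Perm.sign_sumCongr]

lemma tensor_tensor_swap (A : DForm n r s) (B C : DForm n p p) :
    tensor (tensor A C) B =
      fun I J => tensor (tensor A B) C (I ∘ blockSwap r p) (J ∘ blockSwap s p) := by
  funext I J
  simp only [tensor, Function.comp_assoc, blockSwap_comp_castAdd_castAdd,
    blockSwap_comp_castAdd_natAdd, blockSwap_comp_natAdd]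
  ring

protected lemma mul_right_comm (A : DForm n r s) (B C : DForm n p p) :
    mul (mul A B) C = mul (mul A C) B := by
  rw [mul_mul_eq_smul_alt, mul_mul_eq_smul_alt, tensor_tensor_swap, alt_comp, sign_blockSwap,
    sign_blockSwap, sign_mul_self_real, one_smul]

end Tensor

section Derivation

variable (h : Fin n → Fin n → ℝ)

def insertDeriv {m : ℕ} (F : (Fin m → Fin n) → ℝ) (I : Fin m → Fin n) : ℝ :=
  ∑ k, ∑ i, h (I k) i * F (Function.update I k i)

lemma Fh_apply {p q : ℕ} (ω : DForm n p q) (I : Fin p → Fin n) (J : Fin q → Fin n) :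
    Fh h ω I J = insertDeriv h (ω · J) I + insertDeriv h (ω I ·) J :=
  rfl

variable {m : ℕ}

lemma insertDeriv_sum_mul {ι : Type*} [Fintype ι] (c : ι → ℝ) (F : ι → (Fin m → Fin n) → ℝ)
    (I : Fin m → Fin n) :
    insertDeriv h (fun K => ∑ x, c x * F x K) I = ∑ x, c x * insertDeriv h (F x) I := by
  simp only [insertDeriv, mul_sum]
  conv_lhs => arg 2; ext k; rw [sum_comm]
  rw [sum_comm]
  exact Fintype.sum_congr _ _ fun x => Fintype.sum_congr _ _ fun k =>
    Fintype.sum_congr _ _ fun i => by ring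

lemma insertDeriv_comp_perm (F : (Fin m → Fin n) → ℝ) (σ : Perm (Fin m)) (I : Fin m → Fin n) :
    insertDeriv h (fun K => F (K ∘ σ)) I = insertDeriv h F (I ∘ σ) := by
  simp only [insertDeriv]
  rw [← Equiv.sum_comp σ]
  simp only [Function.update_comp_eq_of_injective I σ.injective, Function.comp_apply]

lemma insertDeriv_append_mul {p r : ℕ} (A : (Fin p → Fin n) → ℝ) (B : (Fin r → Fin n) → ℝ)
    (I : Fin (p + r) → Fin n) :
    insertDeriv h (fun K => A (K ∘ Fin.castAdd r) * B (K ∘ Fin.natAdd p)) I =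
      insertDeriv h A (I ∘ Fin.castAdd r) * B (I ∘ Fin.natAdd p) +
        A (I ∘ Fin.castAdd r) * insertDeriv h B (I ∘ Fin.natAdd p) := by
  have castAdd_ne_natAdd (a : Fin p) (b : Fin r) : Fin.castAdd r a ≠ Fin.natAdd p b := by
    rw [Ne, Fin.ext_iff, Fin.val_castAdd, Fin.val_natAdd]
    omega
  simp only [insertDeriv, Fin.sum_univ_add, sum_mul, mul_sum, mul_assoc, Function.comp_apply,
    Function.update_comp_eq_of_injective I (Fin.castAdd_injective p r),
    Function.update_comp_eq_of_injective I (Fin.natAdd_injective r p),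
    Function.update_comp_eq_of_forall_ne I _ fun b => (castAdd_ne_natAdd _ b).symm,
    Function.update_comp_eq_of_forall_ne I _ fun a => castAdd_ne_natAdd a _]
  congr 1
  exact Fintype.sum_congr _ _ fun b => Fintype.sum_congr _ _ fun i => by ring

lemma Fh_smul {p q : ℕ} (c : ℝ) (ω : DForm n p q) : Fh h (c • ω) = c • Fh h ω := by
  funext I J
  simp only [Fh, smul_apply, mul_add, mul_sum]
  congr 1 <;> exact Fintype.sum_congr _ _ fun k => Fintype.sum_congr _ _ fun i => by ring

lemma Fh_alt {p q : ℕ} (ω : DForm n p q) : Fh h (alt ω) = alt (Fh h ω) := by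
  funext I J
  simp only [Fh_apply, alt, insertDeriv_sum_mul, ← sum_add_distrib, mul_add]
  refine Fintype.sum_congr _ _ fun g => ?_
  rw [insertDeriv_comp_perm h (ω · (J ∘ g.2)), insertDeriv_comp_perm h (ω (I ∘ g.1) ·)]

lemma Fh_tensor {p q r s : ℕ} (ω : DForm n p q) (θ : DForm n r s) :
    Fh h (tensor ω θ) = tensor (Fh h ω) θ + tensor ω (Fh h θ) := by
  funext I J
  simp only [Fh_apply, add_apply, tensor]
  rw [insertDeriv_append_mul h (ω · (J ∘ Fin.castAdd s)) (θ · (J ∘ Fin.natAdd q)),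
    insertDeriv_append_mul h (ω (I ∘ Fin.castAdd r) ·) (θ (I ∘ Fin.natAdd p) ·)]
  ring

lemma Fh_mul {p q r s : ℕ} (ω : DForm n p q) (θ : DForm n r s) :
    Fh h (mul ω θ) = mul (Fh h ω) θ + mul ω (Fh h θ) := by
  simp only [mul_eq_smul_alt_tensor, Fh_smul, Fh_alt, Fh_tensor, alt_add, smul_add]

lemma Fh_eq_zero_of_bidegree_zero (ω : DForm n 0 0) : Fh h ω = 0 := by
  funext I J
  simp [Fh]

end Derivation

end DForm

theorem Fh_pow_general {n p : ℕ} (h : Fin n → Fin n → ℝ)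
    (ω : DForm n p p) (k : ℕ) :
    ∀ I J, DForm.Fh h (DForm.pow ω (k + 1)) I J =
      ((k : ℝ) + 1) * DForm.mul (DForm.pow ω k) (DForm.Fh h ω) I J := by
  suffices DForm.Fh h (DForm.pow ω (k + 1)) =
      ((k : ℝ) + 1) • DForm.mul (DForm.pow ω k) (DForm.Fh h ω) from
    fun I J => congrFun₂ this I J
  induction k with
  | zero =>
    rw [DForm.pow_succ, DForm.Fh_mul, DForm.Fh_eq_zero_of_bidegree_zero, DForm.zero_mul]
    simp only [zero_add, Nat.cast_zero, one_smul]
  | succ k ih =>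
    rw [DForm.pow_succ ω (k + 1), DForm.Fh_mul, ih, DForm.smul_mul, DForm.mul_right_comm,
      ← DForm.pow_succ, Nat.cast_succ, add_smul ((k : ℝ) + 1) 1, one_smul]

/-- `F_h(ω^k) = k·ω^{k-1}·F_h(ω)` for any symmetric `(p,p)`-double
form `ω` and any positive integer `k` (written here as `k+1`). -/
theorem Fh_pow {n p : ℕ} (h : Fin n → Fin n → ℝ)
    (hsymm : ∀ i j, h i j = h j i)
    (ω : DForm n p p) (hω : DForm.IsAlt ω) (hωs : DForm.IsSym ω) (k : ℕ) :
    ∀ I J, DForm.Fh h (DForm.pow ω (k + 1)) I J =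
      ((k : ℝ) + 1) * DForm.mul (DForm.pow ω k) (DForm.Fh h ω) I J :=
  Fh_pow_general h ω k
end

section
/- For a symmetric bilinear form h on an n-dimensional inner product space with metric g and any integer p ≥ 1, F_h(g^p) = 2p·g^{p-1}·h, where powers and products are taken in the ring of double forms. -/
open scoped BigOperators
open scoped Classical

/-! In coordinates `g^p = p! · det (δ (I a) (J b))`, a multiple of the form of `p × p` minors of
the identity. The product of the minor form of a matrix `K` with a bilinear form `θ` is the
derivative of the minor in the direction `θ`: a sum of determinants with one column replaced by a
column of `θ`. On a minor, `F_h` replaces one row at a time by the corresponding row of `h` (left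
slot) and one column at a time by the corresponding column of `hᵀ = h` (right slot); by Jacobi's
formula both sums are that same derivative in the direction `h`. So `F_h (g^(p+1))` and
`2 (p+1) g^p h` are both `2 (p+1)!` times it. -/

open Finset Equiv Matrix

namespace Matrix

variable {ι R : Type*} [Fintype ι] [DecidableEq ι] [CommRing R]

/-- The derivative of `t ↦ det (A + t • B)` at `t = 0`. -/
def detDeriv (A B : Matrix ι ι R) : R := ∑ j, (A.updateCol j fun i => B i j).det

theorem detDeriv_self (A : Matrix ι ι R) : detDeriv A A = Fintype.card ι * A.det := by
  simp [detDeriv, updateCol_eq_self]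

theorem detDeriv_eq_sum_perm (A B : Matrix ι ι R) :
    detDeriv A B = ∑ σ : Perm ι, ((Perm.sign σ : ℤ) : R) *
      ∑ j, ∏ i, (A.updateCol j fun i => B i j) (σ i) i := by
  simp only [detDeriv, det_apply', mul_sum]
  exact sum_comm

theorem sum_det_updateRow_eq_detDeriv (A B : Matrix ι ι R) :
    ∑ i, (A.updateRow i (B i)).det = detDeriv A B := by
  simp only [detDeriv_eq_sum_perm, det_apply', mul_sum]
  rw [sum_comm]
  refine sum_congr rfl fun σ _ => ?_
  rw [← Equiv.sum_comp σ]
  refine sum_congr rfl fun m _ => congrArg _ (prod_congr rfl fun j _ => ?_)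
  simp only [updateRow_apply, updateCol_apply, σ.injective.eq_iff]
  split_ifs with hjm
  · subst hjm; rfl
  · rfl

theorem sum_mul_det_updateRow {κ : Type*} [Fintype κ] (M : Matrix ι ι R) (k : ι) (c : κ → R)
    (v : κ → ι → R) :
    ∑ a, c a * (M.updateRow k (v a)).det = (M.updateRow k (∑ a, c a • v a)).det := by
  have h := map_sum (detRowAlternating.toMultilinearMap.toLinearMap M k) (fun a => c a • v a) univ
  simp only [map_smul, smul_eq_mul] at h
  exact h.symm

theorem sum_mul_det_updateCol {κ : Type*} [Fintype κ] (M : Matrix ι ι R) (k : ι) (c : κ → R)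
    (v : κ → ι → R) :
    ∑ a, c a * (M.updateCol k (v a)).det = (M.updateCol k (∑ a, c a • v a)).det := by
  simp only [← det_transpose (M.updateCol k _), ← updateRow_transpose, sum_mul_det_updateRow]

end Matrix

theorem Fin.sum_perm_apply {M : Type*} [AddCommMonoid M] {p : ℕ} (F : Fin (p + 1) → M)
    (a : Fin (p + 1)) : ∑ τ : Perm (Fin (p + 1)), F (τ a) = p.factorial • ∑ m, F m := by
  calc ∑ τ : Perm (Fin (p + 1)), F (τ a) = ∑ τ : Perm (Fin (p + 1)), F (τ 0) := by
        rw [← Equiv.sum_comp (Equiv.mulRight (swap 0 a))]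
        simp [swap_apply_right]
    _ = ∑ x : Fin (p + 1) × Perm (Fin p), F (Perm.decomposeFin.symm x 0) :=
        (Equiv.sum_comp Perm.decomposeFin.symm _).symm
    _ = p.factorial • ∑ m, F m := by
        simp [Fintype.sum_prod_type, Perm.decomposeFin_symm_apply_zero, smul_sum,
          Fintype.card_perm]

def Fin.permExtendCastAdd {p : ℕ} (ρ : Perm (Fin p)) (q : ℕ) : Perm (Fin (p + q)) :=
  finSumFinEquiv.permCongr (ρ.sumCongr 1)

@[simp]
theorem Fin.permExtendCastAdd_castAdd {p : ℕ} (ρ : Perm (Fin p)) (q : ℕ) (i : Fin p) :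
    permExtendCastAdd ρ q (castAdd q i) = castAdd q (ρ i) := by
  simp [permExtendCastAdd, permCongr_apply, finSumFinEquiv_symm_apply_castAdd]

@[simp]
theorem Fin.permExtendCastAdd_natAdd {p : ℕ} (ρ : Perm (Fin p)) (q : ℕ) (i : Fin q) :
    permExtendCastAdd ρ q (natAdd p i) = natAdd p i := by
  simp [permExtendCastAdd, permCongr_apply, finSumFinEquiv_symm_apply_natAdd]

@[simp]
theorem Fin.sign_permExtendCastAdd {p : ℕ} (ρ : Perm (Fin p)) (q : ℕ) :
    Perm.sign (permExtendCastAdd ρ q) = Perm.sign ρ := by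
  simp [permExtendCastAdd, Perm.sign_permCongr, Perm.sign_sumCongr]

section SignedSums

variable {R : Type*} [CommRing R]

local notation "ε" σ:arg => ((Perm.sign σ : ℤ) : R)

theorem Equiv.Perm.intCast_sign_mul_self_s9 {α : Type*} [Fintype α] [DecidableEq α] (ρ : Perm α) :
    ε ρ * ε ρ = 1 := by
  rw [← Int.cast_mul, Int.units_coe_mul_self, Int.cast_one]

theorem Equiv.Perm.sum_sign_mul_comp_mulRight {α : Type*} [Fintype α] [DecidableEq α]
    (π : Perm α) (X : Perm α → R) :
    ∑ σ : Perm α, ε σ * X (σ * π) = ε π * ∑ σ : Perm α, ε σ * X σ := by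
  rw [mul_sum, ← Equiv.sum_comp (Equiv.mulRight π⁻¹)]
  refine sum_congr rfl fun σ _ => ?_
  simp only [coe_mulRight, inv_mul_cancel_right, Perm.sign_mul, Perm.sign_inv, Units.val_mul,
    Int.cast_mul]
  ring

theorem Fin.sum_sign_mul_det_submatrix_castAdd {α β : Type*} {p : ℕ} (K : Matrix α β R)
    (I : Fin (p + 1) → α) (J : Fin p → β) (f : Fin (p + 1) → R) :
    ∑ σ : Perm (Fin (p + 1)),
        ε σ * ((K.submatrix (fun a => I (σ (castAdd 1 a))) J).det * f (σ (natAdd p 0))) =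
      p.factorial * ∑ σ : Perm (Fin (p + 1)),
        ε σ * ((∏ b, K (I (σ (castAdd 1 b))) (J b)) * f (σ (natAdd p 0))) := by
  set X : Perm (Fin (p + 1)) → R := fun σ =>
    (∏ b, K (I (σ (castAdd 1 b))) (J b)) * f (σ (natAdd p 0))
  have hdet : ∀ σ : Perm (Fin (p + 1)),
      (K.submatrix (fun a => I (σ (castAdd 1 a))) J).det * f (σ (natAdd p 0)) =
        ∑ ρ : Perm (Fin p), ε ρ * X (σ * permExtendCastAdd ρ 1) := by
    intro σ
    simp [X, det_apply', sum_mul, mul_assoc]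
  calc _ = ∑ ρ : Perm (Fin p), ε ρ *
          ∑ σ : Perm (Fin (p + 1)), ε σ * X (σ * permExtendCastAdd ρ 1) := by
        simp only [hdet, mul_sum]
        rw [sum_comm]
        exact sum_congr rfl fun _ _ => sum_congr rfl fun _ _ => by ring
    _ = ∑ _ρ : Perm (Fin p), ∑ σ : Perm (Fin (p + 1)), ε σ * X σ := by
        simp only [Perm.sum_sign_mul_comp_mulRight, sign_permExtendCastAdd, ← mul_assoc,
          Perm.intCast_sign_mul_self_s9, one_mul]
    _ = _ := by simp [X, Fintype.card_perm]

theorem Fin.sum_sign_mul_prod_castAdd_mul_eq_det_updateCol {p : ℕ}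
    (A B : Matrix (Fin (p + 1)) (Fin (p + 1)) R) (τ : Perm (Fin (p + 1))) :
    ∑ σ : Perm (Fin (p + 1)), ε σ *
        ((∏ b, A (σ (castAdd 1 b)) (τ (castAdd 1 b))) * B (σ (natAdd p 0)) (τ (natAdd p 0))) =
      ε τ * (A.updateCol (τ (natAdd p 0)) fun i => B i (τ (natAdd p 0))).det := by
  have hlast : natAdd p (0 : Fin 1) = last p := rfl
  set C := A.updateCol (τ (natAdd p 0)) fun i => B i (τ (natAdd p 0))
  have hprod : ∀ σ : Perm (Fin (p + 1)),
      (∏ b, A (σ (castAdd 1 b)) (τ (castAdd 1 b))) * B (σ (natAdd p 0)) (τ (natAdd p 0)) =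
        ∏ j, C (σ j) (τ j) := by
    intro σ
    rw [Fin.prod_univ_castSucc, hlast]
    simp [C, hlast, τ.injective.eq_iff, castSucc_ne_last]
    rfl
  rw [← det_permute', det_apply']
  simp only [hprod, submatrix_apply, id_eq]

end SignedSums

namespace DForm

variable {n : ℕ}

local notation "ε" σ:arg => ((Perm.sign σ : ℤ) : ℝ)

def minorForm (K : Matrix (Fin n) (Fin n) ℝ) (p : ℕ) : DForm n p p :=
  fun I J => (K.submatrix I J).det

theorem gd_eq_ofBilin_one : (gd : DForm n 1 1) = ofBilin (1 : Matrix (Fin n) (Fin n) ℝ) := by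
  funext I J
  simp [gd, ofBilin, one_apply]

theorem mul_const_mul_left {p q r s : ℕ} (c : ℝ) (ω : DForm n p q) (θ : DForm n r s)
    (I : Fin (p + r) → Fin n) (J : Fin (q + s) → Fin n) :
    mul (fun I J => c * ω I J) θ I J = c * mul ω θ I J := by
  simp only [mul, mul_sum]
  exact sum_congr rfl fun _ _ => sum_congr rfl fun _ _ => by ring

theorem Fh_const_mul {p q : ℕ} (h : Fin n → Fin n → ℝ) (c : ℝ) (ω : DForm n p q)
    (I : Fin p → Fin n) (J : Fin q → Fin n) :
    Fh h (fun I J => c * ω I J) I J = c * Fh h ω I J := by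
  simp only [Fh, mul_add, mul_sum]
  congr 1 <;> exact sum_congr rfl fun _ _ => sum_congr rfl fun _ _ => by ring

theorem sum_mul_minorForm_update_left {p : ℕ} (h K : Matrix (Fin n) (Fin n) ℝ)
    (I J : Fin p → Fin n) (k : Fin p) :
    ∑ i, h (I k) i * minorForm K p (Function.update I k i) J =
      ((K.submatrix I J).updateRow k fun b => (h * K) (I k) (J b)).det := by
  have hrow : ∀ i, K.submatrix (Function.update I k i) J =
      (K.submatrix I J).updateRow k fun b => K i (J b) := by
    intro i
    ext a b
    by_cases hak : a = k
    · subst hak; simp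
    · simp [hak]
  simp only [minorForm, hrow, sum_mul_det_updateRow]
  congr 2
  ext b
  simp [mul_apply]

theorem sum_mul_minorForm_update_right {p : ℕ} (h K : Matrix (Fin n) (Fin n) ℝ)
    (I J : Fin p → Fin n) (k : Fin p) :
    ∑ i, h (J k) i * minorForm K p I (Function.update J k i) =
      ((K.submatrix I J).updateCol k fun a => (K * hᵀ) (I a) (J k)).det := by
  have hcol : ∀ i, K.submatrix I (Function.update J k i) =
      (K.submatrix I J).updateCol k fun a => K (I a) i := by
    intro i
    ext a b
    by_cases hbk : b = k
    · subst hbk; simp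
    · simp [hbk]
  simp only [minorForm, hcol, sum_mul_det_updateCol]
  congr 2
  ext a
  simp [mul_apply, mul_comm]

theorem Fh_minorForm_one {p : ℕ} (h : Matrix (Fin n) (Fin n) ℝ) (hh : h.IsSymm)
    (I J : Fin p → Fin n) :
    Fh h (minorForm 1 p) I J =
      2 * detDeriv ((1 : Matrix (Fin n) (Fin n) ℝ).submatrix I J) (h.submatrix I J) := by
  simp only [Fh, sum_mul_minorForm_update_left, sum_mul_minorForm_update_right, Matrix.mul_one,
    Matrix.one_mul, hh.eq]
  rw [two_mul]
  exact congrArg₂ (· + ·) (sum_det_updateRow_eq_detDeriv _ _) rfl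

theorem mul_minorForm_ofBilin {p : ℕ} (K θ : Matrix (Fin n) (Fin n) ℝ)
    (I J : Fin (p + 1) → Fin n) :
    mul (minorForm K p) (ofBilin θ) I J = detDeriv (K.submatrix I J) (θ.submatrix I J) := by
  set A := K.submatrix I J
  set B := θ.submatrix I J
  set l : Fin (p + 1) := Fin.natAdd p 0
  have hτ : ∀ τ : Perm (Fin (p + 1)), ∑ σ : Perm (Fin (p + 1)), ε σ * ε τ *
        minorForm K p (fun a => I (σ (Fin.castAdd 1 a))) (fun b => J (τ (Fin.castAdd 1 b))) *
        ofBilin θ (fun a => I (σ (Fin.natAdd p a))) (fun b => J (τ (Fin.natAdd p b))) =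
      p.factorial * (A.updateCol (τ l) fun i => B i (τ l)).det := by
    intro τ
    calc _ = ε τ * ∑ σ : Perm (Fin (p + 1)), ε σ *
          (minorForm K p (fun a => I (σ (Fin.castAdd 1 a))) (fun b => J (τ (Fin.castAdd 1 b))) *
            θ (I (σ l)) (J (τ l))) := by
          rw [mul_sum]
          exact sum_congr rfl fun σ _ => by simp only [ofBilin]; ring
      _ = ε τ * (p.factorial * ∑ σ : Perm (Fin (p + 1)), ε σ *
            ((∏ b, A (σ (Fin.castAdd 1 b)) (τ (Fin.castAdd 1 b))) * B (σ l) (τ l))) :=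
          congrArg _ <| Fin.sum_sign_mul_det_submatrix_castAdd K I
            (fun b => J (τ (Fin.castAdd 1 b))) fun i => θ (I i) (J (τ l))
      _ = (ε τ * ε τ) * (p.factorial * (A.updateCol (τ l) fun i => B i (τ l)).det) := by
          rw [Fin.sum_sign_mul_prod_castAdd_mul_eq_det_updateCol]
          ring
      _ = _ := by rw [Perm.intCast_sign_mul_self_s9, one_mul]
  calc mul (minorForm K p) (ofBilin θ) I J
      = ((p.factorial * p.factorial : ℕ) : ℝ)⁻¹ *
          ∑ τ : Perm (Fin (p + 1)), p.factorial * (A.updateCol (τ l) fun i => B i (τ l)).det := by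
        unfold mul
        rw [sum_comm]
        simp only [hτ, Nat.factorial_one, mul_one]
    _ = detDeriv A B := by
        rw [← mul_sum, Fin.sum_perm_apply (fun m => (A.updateCol m fun i => B i m).det), detDeriv,
          nsmul_eq_mul]
        push_cast
        field_simp

theorem gpow_eq_factorial_mul_minorForm_one (p : ℕ) :
    gpow p = fun I J => (p.factorial : ℝ) * minorForm (1 : Matrix (Fin n) (Fin n) ℝ) p I J := by
  induction p with
  | zero =>
    funext I J
    simp [gpow, minorForm]
  | succ p ih =>
    funext I J
    calc gpow (p + 1) I J
        = p.factorial * mul (minorForm 1 p) (ofBilin (1 : Matrix (Fin n) (Fin n) ℝ)) I J := by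
          rw [gpow, ih, gd_eq_ofBilin_one, mul_const_mul_left]
      _ = p.factorial * ((p + 1) * minorForm 1 (p + 1) I J) := by
          rw [mul_minorForm_ofBilin, detDeriv_self, Fintype.card_fin]
          push_cast
          rfl
      _ = _ := by
          push_cast [Nat.factorial_succ]
          ring

end DForm

/-- For a symmetric bilinear form `h` and `p ≥ 1` (written `p+1`),
`F_h(g^p) = 2p·g^{p-1}·h` in the ring of double forms. -/
theorem Fh_gpow {n p : ℕ} (h : Fin n → Fin n → ℝ)
    (hsymm : ∀ i j, h i j = h j i) :
    ∀ I J, DForm.Fh h (DForm.gpow (n := n) (p + 1)) I J =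
      2 * ((p : ℝ) + 1) * DForm.mul (DForm.gpow p) (DForm.ofBilin h) I J := by
  intro I J
  rw [DForm.gpow_eq_factorial_mul_minorForm_one, DForm.Fh_const_mul,
    DForm.Fh_minorForm_one h (Matrix.IsSymm.ext fun i j => hsymm j i),
    DForm.gpow_eq_factorial_mul_minorForm_one, DForm.mul_const_mul_left,
    DForm.mul_minorForm_ofBilin 1 h]
  push_cast [Nat.factorial_succ]
  ring
end

section
/- For symmetric bilinear forms h and k on an inner product space, the (1,1)-double form F_h(k) corresponds, under the metric identification with endomorphisms, to the anticommutator: the endomorphism of F_h(k) equals h̄∘k̄ + k̄∘h̄, where h̄ and k̄ are the endomorphisms associated to h and k. -/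
open scoped BigOperators
open scoped Classical

/-- For symmetric bilinear forms `h` and `k`, the `(1,1)`-double
form `F_h(k)` corresponds, under the metric identification with endomorphisms,
to the anticommutator `h̄∘k̄ + k̄∘h̄`. -/
theorem Fh_anticommutator {n : ℕ} (h k : Fin n → Fin n → ℝ)
    (hsymm : ∀ i j, h i j = h j i) (ksymm : ∀ i j, k i j = k j i) :
    ∀ I J : Fin 1 → Fin n,
      DForm.Fh h (DForm.ofBilin k) I J =
        ∑ m : Fin n, (h (I 0) m * k m (J 0) + k (I 0) m * h m (J 0)) := by
  intro I J
  simp only [DForm.Fh, DForm.ofBilin, Fin.sum_univ_one, Function.update_self,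
    Finset.sum_add_distrib]
  congr 1
  all_goals exact Finset.sum_congr rfl fun i _ => by rw [hsymm]; ring
end

section
/- For any (n,n)-double form ω on an n-dimensional inner product space and any symmetric bilinear form h, F_h(ω) = 2(tr_g h)·ω. -/
open scoped BigOperators
open scoped Classical

lemma Fh_key {n : ℕ} (ω : DForm n n n)
    (hsign : ∀ (σ : Equiv.Perm (Fin n)) (I J : Fin n → Fin n),
      ω (I ∘ σ) J = ((Equiv.Perm.sign σ : ℤ) : ℝ) * ω I J)
    (hzero : ∀ I J : Fin n → Fin n, ¬ Function.Injective I → ω I J = 0)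
    (h : Fin n → Fin n → ℝ) (I J : Fin n → Fin n) :
    ∑ k : Fin n, ∑ i : Fin n, h (I k) i * ω (Function.update I k i) J
      = (∑ i : Fin n, h i i) * ω I J := by
  by_cases hInj : Function.Injective I
  · have hb : Function.Bijective I := (Finite.injective_iff_bijective).1 hInj
    have hin : ∀ k : Fin n,
        (∑ i : Fin n, h (I k) i * ω (Function.update I k i) J)
          = h (I k) (I k) * ω I J := by
      intro k
      rw [Finset.sum_eq_single (I k)]
      · rw [Function.update_eq_self]
      · intro i _ hi
        obtain ⟨m, hm⟩ := hb.2 i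
        have hmk : m ≠ k := by
          rintro rfl; exact hi hm.symm
        have : ¬ Function.Injective (Function.update I k i) := by
          intro hinj
          have h1 : Function.update I k i k = Function.update I k i m := by
            rw [Function.update_self, Function.update_of_ne hmk, hm]
          exact hmk.symm (hinj h1)
        rw [hzero _ _ this, mul_zero]
      · intro hk; exact absurd (Finset.mem_univ _) hk
    rw [Finset.sum_congr rfl (fun k _ => hin k), ← Finset.sum_mul]
    congr 1
    exact Fintype.sum_bijective I hb _ _ (fun k => rfl)
  · obtain ⟨a, b, hab, hne⟩ := Function.not_injective_iff.1 hInj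
    have hrhs : ω I J = 0 := hzero _ _ hInj
    set σ := Equiv.swap a b with hσ
    have hsswap : ((Equiv.Perm.sign σ : ℤ) : ℝ) = -1 := by
      rw [Equiv.Perm.sign_swap hne]; norm_num
    have hIσ : ∀ k, I (σ k) = I k := by
      intro k
      rcases eq_or_ne k a with rfl | hka
      · simp [hσ, Equiv.swap_apply_left, hab]
      rcases eq_or_ne k b with rfl | hkb
      · simp [hσ, Equiv.swap_apply_right, hab]
      · simp [hσ, Equiv.swap_apply_of_ne_of_ne hka hkb]
    have hupd : ∀ (k : Fin n) (i : Fin n),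
        Function.update I (σ k) i = (Function.update I k i) ∘ σ := by
      intro k i
      funext x
      by_cases hx : x = σ k
      · subst hx
        rw [Function.update_self, Function.comp_apply, Equiv.swap_apply_self,
          Function.update_self]
      · have hσx : σ x ≠ k := by
          intro hc
          apply hx
          rw [← hc, Equiv.swap_apply_self]
        rw [Function.update_of_ne hx, Function.comp_apply,
          Function.update_of_ne hσx, hIσ]
    have hF : ∀ k : Fin n,
        (∑ i : Fin n, h (I (σ k)) i * ω (Function.update I (σ k) i) J)
          = -(∑ i : Fin n, h (I k) i * ω (Function.update I k i) J) := by
      intro k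
      rw [← Finset.sum_neg_distrib]
      refine Finset.sum_congr rfl (fun i _ => ?_)
      rw [hIσ, hupd, hsign, hsswap]
      ring
    have hcomp := Equiv.sum_comp σ
      (fun k => ∑ i : Fin n, h (I k) i * ω (Function.update I k i) J)
    have : ∑ k : Fin n, ∑ i : Fin n, h (I k) i * ω (Function.update I k i) J
        = -(∑ k : Fin n, ∑ i : Fin n, h (I k) i * ω (Function.update I k i) J) := by
      conv_lhs => rw [← hcomp]
      rw [← Finset.sum_neg_distrib]
      exact Finset.sum_congr rfl (fun k _ => hF k)
    have hS : ∑ k : Fin n, ∑ i : Fin n,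
        h (I k) i * ω (Function.update I k i) J = 0 := by linarith
    rw [hS, hrhs, mul_zero]

/-- For any alternating `(n,n)`-double form `ω` and any symmetric
bilinear form `h`, `F_h(ω) = 2(tr_g h)·ω`. -/
theorem Fh_top_degree {n : ℕ} (h : Fin n → Fin n → ℝ)
    (hsymm : ∀ i j, h i j = h j i)
    (ω : DForm n n n) (hω : DForm.IsAlt ω) :
    ∀ I J, DForm.Fh h ω I J = 2 * (∑ i : Fin n, h i i) * ω I J := by
  intro I J
  have h1 := Fh_key ω hω.1 (fun I J hI => hω.2.2 I J (Or.inl hI)) h I J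
  have h2 := Fh_key (fun A B => ω B A) (fun τ A B => hω.2.1 τ B A)
    (fun I J hI => hω.2.2 J I (Or.inr hI)) h J I
  unfold DForm.Fh
  rw [h1, h2]
  ring
end

section
/- The trace of the (2q)-Einstein–Lovelock tensor equals (n-2q) times the (2q)-Gauss-Bonnet curvature: tr_g T_{2q} = (n-2q)·h_{2q}. -/
open scoped BigOperators
open scoped Classical

/-! Contraction is a trace, so it is linear, `c g = n`, and one more contraction after
`c^{2q-1}` is the full contraction `c^{2q}`. Hence
`tr T_{2q} = n h_{2q} - c^{2q}(R^q)/(2q-1)! = n h_{2q} - 2q h_{2q}`, as `(2q)! = 2q (2q-1)!`. -/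

namespace DForm

variable {n : ℕ}

theorem cIter_eq_sum (k : ℕ) {p q : ℕ} (ω : DForm n (p + k) (q + k))
    (I : Fin p → Fin n) (J : Fin q → Fin n) :
    cIter k ω I J = ∑ f : Fin k → Fin n,
      ω (Fin.append f I ∘ Fin.cast (Nat.add_comm p k))
        (Fin.append f J ∘ Fin.cast (Nat.add_comm q k)) := by
  induction k with
  | zero =>
    rw [Fintype.sum_unique, Subsingleton.elim default Fin.elim0]
    simp [cIter, Function.comp_def]
  | succ k ih =>
    have cons_append {r : ℕ} (i : Fin n) (f : Fin k → Fin n) (K : Fin r → Fin n) :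
        (Fin.cons i (Fin.append f K ∘ Fin.cast (Nat.add_comm r k)) : Fin (r + k + 1) → Fin n) =
          Fin.append (Fin.cons i f) K ∘ Fin.cast (Nat.add_comm r (k + 1)) := by
      rw [Fin.append_cons]
      funext a
      refine Fin.cases ?_ (fun b => ?_) a <;> simp
    rw [cIter, ih, ← (Fin.consEquiv fun _ => Fin n).sum_comp, Fintype.sum_prod_type,
      Finset.sum_comm]
    simp only [contr, cons_append]
    rfl

theorem fullc_eq_sum {p : ℕ} (ω : DForm n p p) : fullc ω = ∑ F : Fin p → Fin n, ω F F := by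
  rw [fullc, cIter_eq_sum]
  refine Finset.sum_congr rfl fun F _ => ?_
  simp [cast']

theorem fullc_cIter_cast' {m p k : ℕ} (h : m = p + k) (ω : DForm n m m) :
    fullc (cIter k (cast' h h ω)) = fullc ω := by
  let e : (Fin k → Fin n) × (Fin p → Fin n) ≃ (Fin m → Fin n) :=
    (Fin.appendEquiv k p).trans ((finCongr (h.trans (Nat.add_comm p k)).symm).arrowCongr (.refl _))
  rw [fullc_eq_sum, fullc_eq_sum, ← e.sum_comp, Fintype.sum_prod_type, Finset.sum_comm]
  simp only [cIter_eq_sum, cast']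
  rfl

theorem fullc_mul_sub_mul {p : ℕ} (a b : ℝ) (ω θ : DForm n p p) :
    fullc (fun I J => a * ω I J - b * θ I J) = a * fullc ω - b * fullc θ := by
  rw [fullc_eq_sum (p := p) fun I J => a * ω I J - b * θ I J, fullc_eq_sum ω, fullc_eq_sum θ,
    Finset.sum_sub_distrib, Finset.mul_sum, Finset.mul_sum]

theorem fullc_gd : fullc (gd : DForm n 1 1) = n := by
  simp [fullc_eq_sum, gd]

end DForm

/-- The trace of the `(2q)`-Einstein–Lovelock tensor
`T_{2q} = h_{2q}·g - (1/(2q-1)!)c^{2q-1}(R^q)` equals `(n-2q)·h_{2q}`, where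
`h_{2q} = (1/(2q)!)c^{2q}(R^q)` is the `(2q)`-Gauss-Bonnet curvature. -/
theorem trace_lovelock {n q : ℕ} (hq : 1 ≤ q)
    (R : DForm n 2 2) :
    DForm.fullc (fun I J : Fin 1 → Fin n =>
        (((2 * q).factorial : ℝ))⁻¹ * DForm.fullc (DForm.pow R q) *
            DForm.gd I J -
          (((2 * q - 1).factorial : ℝ))⁻¹ *
            DForm.cIter (p := 1) (q := 1) (2 * q - 1)
              (DForm.cast' (by omega) (by omega) (DForm.pow R q)) I J) =
      ((n : ℝ) - 2 * q) *
        ((((2 * q).factorial : ℝ))⁻¹ * DForm.fullc (DForm.pow R q)) := by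
  rw [DForm.fullc_mul_sub_mul, DForm.fullc_gd, DForm.fullc_cIter_cast',
    ← Nat.mul_factorial_pred (by omega : 2 * q ≠ 0)]
  push_cast
  field_simp
end

section
/- Let R be an algebraic curvature tensor (a symmetric (2,2)-double form satisfying the first Bianchi identity) on an n-dimensional inner product space, and let q satisfy 2q ≤ n. Then the Gauss-Bonnet curvature admits the two equivalent expressions: (1/(n-2q)!)·*(g^{n-2q}·R^q) = (1/(2q)!)·c^{2q}(R^q). -/
open scoped BigOperators
open scoped Classical

noncomputable section
namespace GBAux

/-- real-valued sign of a permutation -/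
def sgn {α : Type*} [DecidableEq α] [Fintype α] (σ : Equiv.Perm α) : ℝ :=
  ((Equiv.Perm.sign σ : ℤ) : ℝ)

lemma sgn_mul {α : Type*} [DecidableEq α] [Fintype α] (σ τ : Equiv.Perm α) :
    sgn (σ * τ) = sgn σ * sgn τ := by
  simp [sgn]

lemma sgn_sq {α : Type*} [DecidableEq α] [Fintype α] (σ : Equiv.Perm α) :
    sgn σ * sgn σ = 1 := by
  rcases Int.units_eq_one_or (Equiv.Perm.sign σ) with h | h <;> simp [sgn, h]

lemma sgn_inv {α : Type*} [DecidableEq α] [Fintype α] (σ : Equiv.Perm α) :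
    sgn σ⁻¹ = sgn σ := by
  simp [sgn]

lemma sgn_one {α : Type*} [DecidableEq α] [Fintype α] :
    sgn (1 : Equiv.Perm α) = 1 := by simp [sgn]

lemma fin_cast_inj {a b : ℕ} (h : a = b) {x y : Fin a} :
    Fin.cast h x = Fin.cast h y ↔ x = y := by
  constructor
  · intro hxy; exact Fin.ext (by simpa [Fin.ext_iff] using hxy)
  · rintro rfl; rfl

/-- block sum of permutations -/
def blk {a b : ℕ} (α : Equiv.Perm (Fin a)) (β : Equiv.Perm (Fin b)) :
    Equiv.Perm (Fin (a + b)) :=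
  finSumFinEquiv.permCongr (α.sumCongr β)

lemma blk_castAdd {a b : ℕ} (α : Equiv.Perm (Fin a)) (β : Equiv.Perm (Fin b)) (i : Fin a) :
    blk α β (Fin.castAdd b i) = Fin.castAdd b (α i) := by
  simp [blk, Equiv.permCongr_apply]

lemma blk_natAdd {a b : ℕ} (α : Equiv.Perm (Fin a)) (β : Equiv.Perm (Fin b)) (j : Fin b) :
    blk α β (Fin.natAdd a j) = Fin.natAdd a (β j) := by
  simp [blk, Equiv.permCongr_apply]

lemma sgn_blk {a b : ℕ} (α : Equiv.Perm (Fin a)) (β : Equiv.Perm (Fin b)) :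
    sgn (blk α β) = sgn α * sgn β := by
  simp [blk, sgn, Equiv.Perm.sign_permCongr, Equiv.Perm.sign_sumCongr]

lemma blk_inv_natAdd {a b : ℕ} (α : Equiv.Perm (Fin a)) (j : Fin b) :
    (blk α 1)⁻¹ (Fin.natAdd a j) = Fin.natAdd a j := by
  have := blk_natAdd α (1 : Equiv.Perm (Fin b)) j
  simp only [Equiv.Perm.one_apply] at this
  rw [Equiv.Perm.inv_eq_iff_eq]
  exact this.symm

lemma natAdd_inj {a b : ℕ} {x y : Fin b} (h : Fin.natAdd a x = Fin.natAdd a y) : x = y := by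
  have := congrArg Fin.val h
  simp [Fin.ext_iff] at this ⊢
  omega

lemma castAdd_inj {a b : ℕ} {x y : Fin a} (h : Fin.castAdd b x = Fin.castAdd b y) : x = y := by
  have := congrArg Fin.val h
  simp [Fin.ext_iff] at this ⊢
  omega

/-- a permutation fixing the left block pointwise is a right-block permutation -/
lemma blk_surj_right {m p : ℕ} (ρ : Equiv.Perm (Fin (m + p)))
    (h : ∀ a : Fin m, ρ (Fin.castAdd p a) = Fin.castAdd p a) :
    ∃ μ : Equiv.Perm (Fin p), ρ = blk 1 μ := by
  have hge : ∀ b : Fin p, m ≤ (ρ (Fin.natAdd m b)).val := by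
    intro b
    by_contra hlt
    push_neg at hlt
    have hx : ρ (Fin.natAdd m b) = Fin.castAdd p ⟨(ρ (Fin.natAdd m b)).val, hlt⟩ :=
      Fin.ext rfl
    have := h ⟨(ρ (Fin.natAdd m b)).val, hlt⟩
    rw [← hx] at this
    have := ρ.injective this.symm  -- castAdd = natAdd?
    have := congrArg Fin.val this
    simp at this
    omega
  set ν : Fin p → Fin p := fun b => ⟨(ρ (Fin.natAdd m b)).val - m, by
    have := (ρ (Fin.natAdd m b)).isLt; have := hge b; omega⟩ with hν
  have hinj : Function.Injective ν := by
    intro b b' hbb'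
    have h1 := hge b; have h2 := hge b'
    have : (ρ (Fin.natAdd m b)).val = (ρ (Fin.natAdd m b')).val := by
      have := congrArg Fin.val hbb'
      simp [hν] at this
      omega
    have : ρ (Fin.natAdd m b) = ρ (Fin.natAdd m b') := Fin.ext this
    exact natAdd_inj (ρ.injective this)
  have hbij := Finite.injective_iff_bijective.mp hinj
  refine ⟨Equiv.ofBijective ν hbij, ?_⟩
  apply Equiv.ext
  intro x
  induction x using Fin.addCases with
  | left a => rw [h a, blk_castAdd]; simp
  | right b =>
      rw [blk_natAdd]
      apply Fin.ext
      have := hge b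
      simp [Equiv.ofBijective, hν]
      omega

lemma blk_surj_left {m p : ℕ} (ρ : Equiv.Perm (Fin (m + p)))
    (h : ∀ b : Fin p, ρ (Fin.natAdd m b) = Fin.natAdd m b) :
    ∃ α : Equiv.Perm (Fin m), ρ = blk α 1 := by
  have hlt : ∀ a : Fin m, (ρ (Fin.castAdd p a)).val < m := by
    intro a
    by_contra hge
    push_neg at hge
    have hx : ρ (Fin.castAdd p a) = Fin.natAdd m ⟨(ρ (Fin.castAdd p a)).val - m, by
        have := (ρ (Fin.castAdd p a)).isLt; omega⟩ := by
      apply Fin.ext; simp; omega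
    have := h ⟨(ρ (Fin.castAdd p a)).val - m, by
        have := (ρ (Fin.castAdd p a)).isLt; omega⟩
    rw [← hx] at this
    have := congrArg Fin.val (ρ.injective this.symm)
    simp at this
    omega
  set ν : Fin m → Fin m := fun a => ⟨(ρ (Fin.castAdd p a)).val, hlt a⟩ with hν
  have hinj : Function.Injective ν := by
    intro a a' haa'
    have : ρ (Fin.castAdd p a) = ρ (Fin.castAdd p a') := by
      apply Fin.ext
      have := congrArg Fin.val haa'
      simpa [hν] using this
    exact castAdd_inj (ρ.injective this)
  have hbij := Finite.injective_iff_bijective.mp hinj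
  refine ⟨Equiv.ofBijective ν hbij, ?_⟩
  apply Equiv.ext
  intro x
  induction x using Fin.addCases with
  | left a =>
      rw [blk_castAdd]
      apply Fin.ext
      simp [Equiv.ofBijective, hν]
  | right b => rw [h b, blk_natAdd]; simp


/-- both-block antisymmetry -/
def Alt2 {n p q : ℕ} (ω : DForm n p q) : Prop :=
  (∀ (ρ : Equiv.Perm (Fin p)) (I : Fin p → Fin n) (J : Fin q → Fin n),
      ω (I ∘ ρ) J = sgn ρ * ω I J) ∧
  (∀ (τ : Equiv.Perm (Fin q)) (I : Fin p → Fin n) (J : Fin q → Fin n),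
      ω I (J ∘ τ) = sgn τ * ω I J)

variable {n : ℕ}

lemma alt2_mul {p q r s : ℕ} (ω : DForm n p q) (θ : DForm n r s) :
    Alt2 (DForm.mul ω θ) := by
  constructor
  · intro ρ I J
    show _ = sgn ρ * _
    unfold DForm.mul
    simp only [Finset.mul_sum]
    refine Fintype.sum_bijective (fun σ => ρ * σ) (Group.mulLeft_bijective ρ) _ _ (fun σ => ?_)
    refine Finset.sum_congr rfl (fun τ _ => ?_)
    simp only [Function.comp_apply, Equiv.Perm.mul_apply, map_mul]
    rcases Int.units_eq_one_or (Equiv.Perm.sign ρ) with h | h <;>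
      rw [show sgn ρ = ((Equiv.Perm.sign ρ : ℤ) : ℝ) from rfl, h] <;> push_cast <;> ring
  · intro τ0 I J
    show _ = sgn τ0 * _
    unfold DForm.mul
    simp only [Finset.mul_sum]
    refine Finset.sum_congr rfl (fun σ _ => ?_)
    refine Fintype.sum_bijective (fun τ => τ0 * τ) (Group.mulLeft_bijective τ0) _ _ (fun τ => ?_)
    simp only [Function.comp_apply, Equiv.Perm.mul_apply, map_mul]
    rcases Int.units_eq_one_or (Equiv.Perm.sign τ0) with h | h <;>
      rw [show sgn τ0 = ((Equiv.Perm.sign τ0 : ℤ) : ℝ) from rfl, h] <;> push_cast <;> ring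

lemma alt2_zero (ω : DForm n 0 0) : Alt2 ω := by
  constructor <;> intro ρ I J
  · have h2 : I ∘ ρ = I := funext fun x => x.elim0
    have h1 : ρ = 1 := Equiv.ext fun x => x.elim0
    rw [h2, h1, sgn_one, one_mul]
  · have h2 : J ∘ ρ = J := funext fun x => x.elim0
    have h1 : ρ = 1 := Equiv.ext fun x => x.elim0
    rw [h2, h1, sgn_one, one_mul]

lemma alt2_pow (R : DForm n 2 2) (q : ℕ) : Alt2 (DForm.pow R q) := by
  cases q with
  | zero => exact alt2_zero _
  | succ k => exact alt2_mul (DForm.pow R k) R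

lemma alt2_diag_zero {p : ℕ} {T : DForm n p p} (hT : Alt2 T)
    {K : Fin p → Fin n} (hK : ¬ Function.Injective K) (I : Fin p → Fin n) :
    T I K = 0 := by
  rw [Function.not_injective_iff] at hK
  obtain ⟨i, j, hij, hne⟩ := hK
  have hswap : K ∘ (Equiv.swap i j) = K := by
    funext x
    rcases eq_or_ne x i with rfl | hxi
    · simp [Equiv.swap_apply_left, hij]
    rcases eq_or_ne x j with rfl | hxj
    · simp [Equiv.swap_apply_right, hij]
    · simp [Equiv.swap_apply_of_ne_of_ne hxi hxj]
  have h := hT.2 (Equiv.swap i j) I K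
  rw [hswap] at h
  have hs : sgn (Equiv.swap i j) = -1 := by
    simp [sgn, Equiv.Perm.sign_swap hne]
  rw [hs] at h
  linarith

lemma sign_blk_u {a b : ℕ} (α : Equiv.Perm (Fin a)) (β : Equiv.Perm (Fin b)) :
    Equiv.Perm.sign (blk α β) = Equiv.Perm.sign α * Equiv.Perm.sign β := by
  simp [blk, Equiv.Perm.sign_permCongr, Equiv.Perm.sign_sumCongr]

/-- the "generalized Kronecker delta" determinant -/
def Ddet {n m : ℕ} (K L : Fin m → Fin n) : ℝ :=
  ∑ π : Equiv.Perm (Fin m), sgn π * ∏ a : Fin m, (if K a = L (π a) then (1:ℝ) else 0)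

lemma gpow_step {m : ℕ} (K L : Fin (m + 1) → Fin n)
    (IH : ∀ K' L' : Fin m → Fin n, DForm.gpow m K' L' = (m.factorial : ℝ) * Ddet K' L') :
    (∑ σ : Equiv.Perm (Fin (m + 1)), ∑ τ : Equiv.Perm (Fin (m + 1)),
      ((Equiv.Perm.sign σ : ℤ) : ℝ) * ((Equiv.Perm.sign τ : ℤ) : ℝ) *
        DForm.gpow m (fun a => K (σ (Fin.castAdd 1 a))) (fun b => L (τ (Fin.castAdd 1 b))) *
        DForm.gd (fun a => K (σ (Fin.natAdd m a))) (fun b => L (τ (Fin.natAdd m b))))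
    = ((m + 1).factorial : ℝ) * ((m.factorial : ℝ) * ((m.factorial : ℝ) * Ddet K L)) := by
  have step1 : ∀ σ τ : Equiv.Perm (Fin (m + 1)),
      ((Equiv.Perm.sign σ : ℤ) : ℝ) * ((Equiv.Perm.sign τ : ℤ) : ℝ) *
        DForm.gpow m (fun a => K (σ (Fin.castAdd 1 a))) (fun b => L (τ (Fin.castAdd 1 b))) *
        DForm.gd (fun a => K (σ (Fin.natAdd m a))) (fun b => L (τ (Fin.natAdd m b)))
      = ∑ π : Equiv.Perm (Fin m), (m.factorial : ℝ) *
          (((Equiv.Perm.sign σ : ℤ) : ℝ) * ((Equiv.Perm.sign τ : ℤ) : ℝ) * sgn π *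
            ∏ x : Fin (m + 1),
              (if K (σ x) = L (τ (blk π (1 : Equiv.Perm (Fin 1)) x)) then (1:ℝ) else 0)) := by
    intro σ τ
    rw [IH]
    unfold Ddet DForm.gd
    simp only [Finset.mul_sum, Finset.sum_mul]
    refine Finset.sum_congr rfl fun π _ => ?_
    rw [show (∏ x : Fin (m + 1),
          (if K (σ x) = L (τ (blk π (1 : Equiv.Perm (Fin 1)) x)) then (1:ℝ) else 0))
        = (∏ a : Fin m,
            (if K (σ (Fin.castAdd 1 a)) = L (τ (Fin.castAdd 1 (π a))) then (1:ℝ) else 0)) *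
          (if K (σ (Fin.natAdd m 0)) = L (τ (Fin.natAdd m 0)) then (1:ℝ) else 0) from by
      rw [Fin.prod_univ_add, Fin.prod_univ_one]
      simp only [blk_castAdd, blk_natAdd, Equiv.Perm.one_apply]]
    ring
  calc (∑ σ : Equiv.Perm (Fin (m + 1)), ∑ τ : Equiv.Perm (Fin (m + 1)),
      ((Equiv.Perm.sign σ : ℤ) : ℝ) * ((Equiv.Perm.sign τ : ℤ) : ℝ) *
        DForm.gpow m (fun a => K (σ (Fin.castAdd 1 a))) (fun b => L (τ (Fin.castAdd 1 b))) *
        DForm.gd (fun a => K (σ (Fin.natAdd m a))) (fun b => L (τ (Fin.natAdd m b))))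
      = ∑ σ : Equiv.Perm (Fin (m + 1)), ∑ τ : Equiv.Perm (Fin (m + 1)),
          ∑ π : Equiv.Perm (Fin m), (m.factorial : ℝ) *
          (((Equiv.Perm.sign σ : ℤ) : ℝ) * ((Equiv.Perm.sign τ : ℤ) : ℝ) * sgn π *
            ∏ x : Fin (m + 1),
              (if K (σ x) = L (τ (blk π (1 : Equiv.Perm (Fin 1)) x)) then (1:ℝ) else 0)) :=
        Finset.sum_congr rfl fun σ _ => Finset.sum_congr rfl fun τ _ => step1 σ τ
    _ = ∑ σ : Equiv.Perm (Fin (m + 1)), ∑ π : Equiv.Perm (Fin m),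
          ∑ τ : Equiv.Perm (Fin (m + 1)), (m.factorial : ℝ) *
          (((Equiv.Perm.sign σ : ℤ) : ℝ) * ((Equiv.Perm.sign τ : ℤ) : ℝ) * sgn π *
            ∏ x : Fin (m + 1),
              (if K (σ x) = L (τ (blk π (1 : Equiv.Perm (Fin 1)) x)) then (1:ℝ) else 0)) :=
        Finset.sum_congr rfl fun σ _ => Finset.sum_comm
    _ = ∑ _σ : Equiv.Perm (Fin (m + 1)), ∑ _π : Equiv.Perm (Fin m),
          ∑ ρ : Equiv.Perm (Fin (m + 1)), (m.factorial : ℝ) *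
          (sgn ρ * ∏ x : Fin (m + 1), (if K x = L (ρ x) then (1:ℝ) else 0)) := by
        refine Finset.sum_congr rfl fun σ _ => Finset.sum_congr rfl fun π _ => ?_
        refine Eq.symm (Fintype.sum_bijective
          (fun ρ : Equiv.Perm (Fin (m + 1)) => ρ * (σ * (blk π (1 : Equiv.Perm (Fin 1)))⁻¹))
          (Group.mulRight_bijective _) _ _ (fun ρ => ?_))
        have harg : ∀ x : Fin (m + 1),
            (ρ * (σ * (blk π (1 : Equiv.Perm (Fin 1)))⁻¹)) (blk π (1 : Equiv.Perm (Fin 1)) x)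
              = ρ (σ x) := fun x => by
          simp [Equiv.Perm.mul_apply]
        simp only [harg]
        have hprod : (∏ x : Fin (m + 1), (if K (σ x) = L (ρ (σ x)) then (1:ℝ) else 0))
            = ∏ x : Fin (m + 1), (if K x = L (ρ x) then (1:ℝ) else 0) :=
          Fintype.prod_bijective ⇑σ σ.bijective _ _ (fun x => rfl)
        rw [← hprod]
        simp only [map_mul, map_inv, sign_blk_u, map_one, mul_one, Int.units_inv_eq_self]
        rcases Int.units_eq_one_or (Equiv.Perm.sign σ) with h | h <;>
          rcases Int.units_eq_one_or (Equiv.Perm.sign π) with h' | h' <;>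
            simp only [sgn, h, h'] <;> push_cast <;> ring
    _ = ((m + 1).factorial : ℝ) * ((m.factorial : ℝ) * ((m.factorial : ℝ) * Ddet K L)) := by
        have hinner : (∑ ρ : Equiv.Perm (Fin (m + 1)), (m.factorial : ℝ) *
            (sgn ρ * ∏ x : Fin (m + 1), (if K x = L (ρ x) then (1:ℝ) else 0)))
            = (m.factorial : ℝ) * Ddet K L := by
          rw [← Finset.mul_sum]; rfl
        rw [Finset.sum_congr rfl fun σ _ => hinner]
        simp only [Finset.sum_const, Finset.card_univ, Fintype.card_perm, Fintype.card_fin,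
          nsmul_eq_mul]
        try push_cast
        try ring

lemma gpow_eq (m : ℕ) : ∀ K L : Fin m → Fin n,
    DForm.gpow m K L = (m.factorial : ℝ) * Ddet K L := by
  induction m with
  | zero =>
      intro K L
      have huniq : ∀ π : Equiv.Perm (Fin 0), π = 1 := fun π => Equiv.ext fun x => x.elim0
      show (1:ℝ) = _
      unfold Ddet
      rw [show (∑ π : Equiv.Perm (Fin 0), sgn π *
            ∏ a : Fin 0, (if K a = L (π a) then (1:ℝ) else 0))
          = ∑ _π : Equiv.Perm (Fin 0), (1:ℝ) from
        Finset.sum_congr rfl fun π _ => by rw [huniq π]; simp [sgn_one]]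
      rw [Finset.sum_const, Finset.card_univ, Fintype.card_perm, Fintype.card_fin]
      simp
  | succ m IH =>
      intro K L
      show DForm.mul (DForm.gpow m) DForm.gd K L = _
      unfold DForm.mul
      rw [gpow_step K L IH]
      have hm : (m.factorial : ℝ) ≠ 0 := Nat.cast_ne_zero.mpr (Nat.factorial_ne_zero m)
      rw [show (m.factorial * Nat.factorial 1 * m.factorial * Nat.factorial 1 : ℕ)
          = m.factorial * m.factorial from by simp [Nat.factorial]]
      push_cast
      field_simp

/-- prepend a block of indices -/
def extF {n p k : ℕ} (K : Fin k → Fin n) (I : Fin p → Fin n) : Fin (p + k) → Fin n :=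
  fun a => if h : a.val < k then K ⟨a.val, h⟩ else I ⟨a.val - k, by omega⟩

lemma extF_cons {p k : ℕ} (i : Fin n) (K : Fin k → Fin n) (I : Fin p → Fin n) :
    Fin.cons i (extF K I) = extF (n := n) (Fin.cons i K) I := by
  funext a
  rcases Fin.eq_zero_or_eq_succ a with rfl | ⟨a', rfl⟩
  · simp [extF, Fin.cons_zero, Fin.mk_zero]
  · rw [Fin.cons_succ]
    unfold extF
    by_cases h : a'.val < k
    · rw [dif_pos h, dif_pos (show a'.succ.val < k + 1 from by
        simp only [Fin.val_succ]; omega)]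
      have h3 : (⟨a'.succ.val, show a'.succ.val < k + 1 from by
          simp only [Fin.val_succ]; omega⟩ : Fin (k+1)) = Fin.succ ⟨a'.val, h⟩ := by
        apply Fin.ext; simp [Fin.val_succ]
      rw [h3, Fin.cons_succ]
    · rw [dif_neg h, dif_neg (show ¬ a'.succ.val < k + 1 from by
        simp only [Fin.val_succ]; omega)]
      congr 1
      apply Fin.ext
      simp only [Fin.val_succ]
      omega

lemma cIter_eval {p q : ℕ} : ∀ (k : ℕ) (ω : DForm n (p + k) (q + k))
    (I : Fin p → Fin n) (J : Fin q → Fin n),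
    DForm.cIter k ω I J = ∑ K : Fin k → Fin n, ω (extF K I) (extF K J) := by
  intro k
  induction k with
  | zero =>
      intro ω I J
      show ω I J = _
      rw [Fintype.sum_unique]
      have h1 : ∀ (p' : ℕ) (I' : Fin p' → Fin n),
          extF (n := n) (k := 0) (default : Fin 0 → Fin n) I' = I' := by
        intro p' I'
        funext a
        rw [extF, dif_neg (by omega)]
        exact congrArg I' (Fin.ext rfl)
      rw [h1 p I, h1 q J]
  | succ k IH =>
      intro ω I J
      show DForm.cIter k (DForm.contr ω) I J = _
      rw [IH (DForm.contr ω) I J]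
      have hc : ∀ K : Fin k → Fin n, DForm.contr ω (extF K I) (extF K J)
          = ∑ i : Fin n, ω (extF (Fin.cons i K) I) (extF (Fin.cons i K) J) := by
        intro K
        rw [DForm.contr]
        exact Finset.sum_congr rfl fun i _ => by rw [extF_cons, extF_cons]
      rw [Finset.sum_congr rfl fun K _ => hc K]
      rw [Finset.sum_comm]
      rw [← Equiv.sum_comp (Fin.consEquiv (fun _ : Fin (k+1) => Fin n))
        (fun K : Fin (k + 1) → Fin n => ω (extF K I) (extF K J))]
      rw [Fintype.sum_prod_type]
      rfl

lemma fullc_eq {p : ℕ} (T : DForm n p p) :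
    DForm.fullc T = ∑ K : Fin p → Fin n, T K K := by
  rw [DForm.fullc, cIter_eval p _ Fin.elim0 Fin.elim0]
  refine Finset.sum_congr rfl fun K _ => ?_
  rw [DForm.cast']
  have h1 : (fun a => extF (p := 0) K Fin.elim0 (Fin.cast (Nat.zero_add p).symm a)) = K := by
    funext a
    rw [extF, dif_pos (by simpa using a.isLt)]
    exact congrArg K (Fin.ext rfl)
  rw [h1]

lemma exists_perm_extend {m p : ℕ} (h : m + p = n) (K : Fin p → Fin n)
    (hK : Function.Injective K) :
    ∃ σ₀ : Equiv.Perm (Fin (m + p)),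
      ∀ b : Fin p, Fin.cast h (σ₀ (Fin.natAdd m b)) = K b := by
  classical
  set S : Finset (Fin n) := Finset.univ \ Finset.image K Finset.univ with hS
  have hcard : S.card = m := by
    rw [hS, Finset.card_sdiff_of_subset (Finset.subset_univ _),
      Finset.card_image_of_injective _ hK]
    simp [Finset.card_univ]
    omega
  set oe := S.orderIsoOfFin hcard with hoe
  set F : (Fin m ⊕ Fin p) → Fin n := Sum.elim (fun a => (oe a : Fin n)) K with hF
  have hFinj : Function.Injective F := by
    rintro (a | b) (a' | b') hab
    · simp only [hF, Sum.elim_inl] at hab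
      exact congrArg Sum.inl (oe.injective (Subtype.ext hab))
    · exfalso
      have h1 := Finset.mem_sdiff.mp (oe a).2
      have h2 : (oe a : Fin n) = K b' := by simpa [hF] using hab
      exact h1.2 (by rw [h2]; exact Finset.mem_image_of_mem K (Finset.mem_univ b'))
    · exfalso
      have h1 := Finset.mem_sdiff.mp (oe a').2
      have h2 : (oe a' : Fin n) = K b := by
        have := hab.symm
        simpa [hF] using this
      exact h1.2 (by rw [h2]; exact Finset.mem_image_of_mem K (Finset.mem_univ b))
    · exact congrArg Sum.inr (hK (by simpa [hF] using hab))
  have hbij : Function.Bijective F :=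
    (Fintype.bijective_iff_injective_and_card F).mpr
      ⟨hFinj, by simp [Fintype.card_sum]; omega⟩
  refine ⟨(finSumFinEquiv.symm.trans (Equiv.ofBijective F hbij)).trans (finCongr h.symm),
    fun b => ?_⟩
  apply Fin.ext
  simp [Equiv.trans_apply, finSumFinEquiv_symm_apply_natAdd, hF, finCongr_apply]

/-- collapse of the inner permutation sum (fixed σ) -/
lemma sum_rho {m p : ℕ} (h : m + p = n) (T : DForm n p p) (hT : Alt2 T)
    (σ : Equiv.Perm (Fin (m + p))) :
    (∑ ρ : Equiv.Perm (Fin (m + p)), sgn ρ *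
      (∏ a : Fin m, (if σ (Fin.castAdd p a) = ρ (σ (Fin.castAdd p a)) then (1:ℝ) else 0)) *
      T (fun b => Fin.cast h (σ (Fin.natAdd m b)))
        (fun b => Fin.cast h (ρ (σ (Fin.natAdd m b)))))
    = (p.factorial : ℝ) *
        T (fun b => Fin.cast h (σ (Fin.natAdd m b)))
          (fun b => Fin.cast h (σ (Fin.natAdd m b))) := by
  classical
  have hboole : ∀ ρ : Equiv.Perm (Fin (m + p)),
      (∏ a : Fin m, (if σ (Fin.castAdd p a) = ρ (σ (Fin.castAdd p a)) then (1:ℝ) else 0))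
      = if (∀ a : Fin m, σ (Fin.castAdd p a) = ρ (σ (Fin.castAdd p a))) then (1:ℝ) else 0 :=
    fun ρ => Finset.prod_boole.trans (by simp)
  have hterm : ∀ ρ : Equiv.Perm (Fin (m + p)), sgn ρ *
      (∏ a : Fin m, (if σ (Fin.castAdd p a) = ρ (σ (Fin.castAdd p a)) then (1:ℝ) else 0)) *
      T (fun b => Fin.cast h (σ (Fin.natAdd m b)))
        (fun b => Fin.cast h (ρ (σ (Fin.natAdd m b))))
      = if (∀ a : Fin m, σ (Fin.castAdd p a) = ρ (σ (Fin.castAdd p a))) then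
          sgn ρ * T (fun b => Fin.cast h (σ (Fin.natAdd m b)))
            (fun b => Fin.cast h (ρ (σ (Fin.natAdd m b)))) else 0 := by
    intro ρ
    rw [hboole ρ]
    split_ifs with hc
    · ring
    · ring
  rw [Finset.sum_congr rfl fun ρ _ => hterm ρ, ← Finset.sum_filter]
  have hbij : (∑ μ : Equiv.Perm (Fin p),
      T (fun b => Fin.cast h (σ (Fin.natAdd m b))) (fun b => Fin.cast h (σ (Fin.natAdd m b))))
      = ∑ ρ ∈ Finset.univ.filter
          (fun ρ : Equiv.Perm (Fin (m + p)) =>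
            ∀ a : Fin m, σ (Fin.castAdd p a) = ρ (σ (Fin.castAdd p a))),
          sgn ρ * T (fun b => Fin.cast h (σ (Fin.natAdd m b)))
            (fun b => Fin.cast h (ρ (σ (Fin.natAdd m b)))) := by
    refine Finset.sum_bij
      (fun (μ : Equiv.Perm (Fin p)) _ => σ * blk (1 : Equiv.Perm (Fin m)) μ * σ⁻¹)
      ?_ ?_ ?_ ?_
    · intro μ _
      refine Finset.mem_filter.mpr ⟨Finset.mem_univ _, fun a => ?_⟩
      simp [Equiv.Perm.mul_apply, blk_castAdd]
    · intro μ₁ _ μ₂ _ heq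
      have h1 : blk (1 : Equiv.Perm (Fin m)) μ₁ = blk (1 : Equiv.Perm (Fin m)) μ₂ :=
        mul_right_cancel (mul_left_cancel heq)
      apply Equiv.ext
      intro b
      have h2 := congrArg (fun (e : Equiv.Perm (Fin (m + p))) => e (Fin.natAdd m b)) h1
      simp only [blk_natAdd] at h2
      exact natAdd_inj h2
    · intro ρ hρ
      have hcond := (Finset.mem_filter.mp hρ).2
      have hfix : ∀ a : Fin m, (σ⁻¹ * ρ * σ) (Fin.castAdd p a) = Fin.castAdd p a := by
        intro a
        simp [Equiv.Perm.mul_apply, ← hcond a]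
      obtain ⟨μ, hμ⟩ := blk_surj_right (σ⁻¹ * ρ * σ) hfix
      refine ⟨μ, Finset.mem_univ _, ?_⟩
      show σ * blk (1 : Equiv.Perm (Fin m)) μ * σ⁻¹ = ρ
      rw [← hμ]
      group
    · intro μ _
      have h5 : (fun b => Fin.cast h
          ((σ * blk (1 : Equiv.Perm (Fin m)) μ * σ⁻¹) (σ (Fin.natAdd m b))))
          = ((fun b => Fin.cast h (σ (Fin.natAdd m b))) ∘ ⇑μ) := by
        funext b
        simp [Equiv.Perm.mul_apply, blk_natAdd]
      rw [h5, hT.2 μ _ _]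
      have h6 : sgn (σ * blk (1 : Equiv.Perm (Fin m)) μ * σ⁻¹) = sgn μ := by
        simp only [sgn, map_mul, map_inv, sign_blk_u, map_one, one_mul,
          Int.units_inv_eq_self]
        rcases Int.units_eq_one_or (Equiv.Perm.sign σ) with h7 | h7 <;>
          rcases Int.units_eq_one_or (Equiv.Perm.sign μ) with h8 | h8 <;>
            simp [h7, h8]
      rw [h6, ← mul_assoc, sgn_sq, one_mul]
  rw [← hbij, Finset.sum_const, Finset.card_univ, Fintype.card_perm, Fintype.card_fin,
    nsmul_eq_mul]

/-- fiber counting for the outer sum -/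
lemma sum_sigma_diag {m p : ℕ} (h : m + p = n) (T : DForm n p p) (hT : Alt2 T) :
    (∑ σ : Equiv.Perm (Fin (m + p)),
      T (fun b => Fin.cast h (σ (Fin.natAdd m b))) (fun b => Fin.cast h (σ (Fin.natAdd m b))))
    = (m.factorial : ℝ) * ∑ K : Fin p → Fin n, T K K := by
  classical
  set g : Equiv.Perm (Fin (m + p)) → (Fin p → Fin n) :=
    fun σ => (fun b => Fin.cast h (σ (Fin.natAdd m b))) with hg
  have hmaps : ∀ σ ∈ (Finset.univ : Finset (Equiv.Perm (Fin (m + p)))),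
      g σ ∈ Finset.univ.filter (fun K : Fin p → Fin n => Function.Injective K) := by
    intro σ _
    refine Finset.mem_filter.mpr ⟨Finset.mem_univ _, ?_⟩
    intro b b' hbb'
    have hv := congrArg Fin.val hbb'
    have hv2 : (σ (Fin.natAdd m b)).val = (σ (Fin.natAdd m b')).val := hv
    exact natAdd_inj (σ.injective (Fin.ext hv2))
  have hsplit := Finset.sum_fiberwise_of_maps_to hmaps (fun σ => T (g σ) (g σ))
  rw [show (∑ σ : Equiv.Perm (Fin (m + p)),
      T (fun b => Fin.cast h (σ (Fin.natAdd m b))) (fun b => Fin.cast h (σ (Fin.natAdd m b))))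
      = ∑ σ : Equiv.Perm (Fin (m + p)), T (g σ) (g σ) from rfl, ← hsplit]
  have hfib : ∀ K ∈ Finset.univ.filter (fun K : Fin p → Fin n => Function.Injective K),
      (∑ σ ∈ Finset.univ.filter (fun σ => g σ = K), T (g σ) (g σ))
      = (m.factorial : ℝ) * T K K := by
    intro K hK
    have hKinj := (Finset.mem_filter.mp hK).2
    obtain ⟨σ₀, hσ₀⟩ := exists_perm_extend h K hKinj
    rw [Finset.sum_congr rfl (fun σ hσ => by
      rw [(Finset.mem_filter.mp hσ).2] : ∀ σ' ∈ _, T (g σ') (g σ') = T K K)]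
    rw [Finset.sum_const, nsmul_eq_mul]
    congr 1
    have hcard : (Finset.univ : Finset (Equiv.Perm (Fin m))).card
        = (Finset.univ.filter (fun σ => g σ = K)).card := by
      refine Finset.card_bij
        (fun (α : Equiv.Perm (Fin m)) _ => σ₀ * blk α (1 : Equiv.Perm (Fin p))) ?_ ?_ ?_
      · intro α _
        refine Finset.mem_filter.mpr ⟨Finset.mem_univ _, ?_⟩
        funext b
        show Fin.cast h ((σ₀ * blk α (1 : Equiv.Perm (Fin p))) (Fin.natAdd m b)) = K b
        rw [Equiv.Perm.mul_apply, blk_natAdd, Equiv.Perm.one_apply]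
        exact hσ₀ b
      · intro α₁ _ α₂ _ heq
        have h1 : blk α₁ (1 : Equiv.Perm (Fin p)) = blk α₂ (1 : Equiv.Perm (Fin p)) :=
          mul_left_cancel heq
        apply Equiv.ext
        intro a
        have h2 := congrArg (fun (e : Equiv.Perm (Fin (m + p))) => e (Fin.castAdd p a)) h1
        simp only [blk_castAdd] at h2
        exact castAdd_inj h2
      · intro σ hσ
        have hfibmem := (Finset.mem_filter.mp hσ).2
        have hfix : ∀ b : Fin p, (σ₀⁻¹ * σ) (Fin.natAdd m b) = Fin.natAdd m b := by
          intro b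
          have h1 : Fin.cast h (σ (Fin.natAdd m b)) = Fin.cast h (σ₀ (Fin.natAdd m b)) := by
            rw [show Fin.cast h (σ (Fin.natAdd m b)) = K b from congrFun hfibmem b, hσ₀ b]
          have hv := congrArg Fin.val h1
          have hv2 : (σ (Fin.natAdd m b)).val = (σ₀ (Fin.natAdd m b)).val := hv
          have h2 : σ (Fin.natAdd m b) = σ₀ (Fin.natAdd m b) := Fin.ext hv2
          simp [Equiv.Perm.mul_apply, h2]
        obtain ⟨α, hα⟩ := blk_surj_left (σ₀⁻¹ * σ) hfix
        refine ⟨α, Finset.mem_univ _, ?_⟩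
        show σ₀ * blk α (1 : Equiv.Perm (Fin p)) = σ
        rw [← hα]
        group
    rw [← hcard, Finset.card_univ, Fintype.card_perm, Fintype.card_fin]
  rw [Finset.sum_congr rfl hfib, ← Finset.mul_sum]
  congr 1
  exact Finset.sum_filter_of_ne (fun K _ hne => by
    by_contra hni
    exact hne (alt2_diag_zero hT hni K))

lemma mul_gpow_eval {m p : ℕ} (h h' : m + p = n) (T : DForm n p p) (hT : Alt2 T) :
    DForm.mul (DForm.gpow m) T (fun a => Fin.cast h a) (fun a => Fin.cast h' a)
      = (m.factorial : ℝ) * ((p.factorial : ℝ))⁻¹ * ∑ K : Fin p → Fin n, T K K := by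
  rw [Subsingleton.elim h' h]
  unfold DForm.mul
  beta_reduce
  have calc1 : (∑ σ : Equiv.Perm (Fin (m + p)), ∑ τ : Equiv.Perm (Fin (m + p)),
      ((Equiv.Perm.sign σ : ℤ) : ℝ) * ((Equiv.Perm.sign τ : ℤ) : ℝ) *
        DForm.gpow m (fun a => Fin.cast h (σ (Fin.castAdd p a)))
          (fun b => Fin.cast h (τ (Fin.castAdd p b))) *
        T (fun b => Fin.cast h (σ (Fin.natAdd m b)))
          (fun b => Fin.cast h (τ (Fin.natAdd m b))))
      = (m.factorial : ℝ) * (m.factorial : ℝ) * (m.factorial : ℝ) * (p.factorial : ℝ) *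
          ∑ K : Fin p → Fin n, T K K :=
    calc (∑ σ : Equiv.Perm (Fin (m + p)), ∑ τ : Equiv.Perm (Fin (m + p)),
        ((Equiv.Perm.sign σ : ℤ) : ℝ) * ((Equiv.Perm.sign τ : ℤ) : ℝ) *
          DForm.gpow m (fun a => Fin.cast h (σ (Fin.castAdd p a)))
            (fun b => Fin.cast h (τ (Fin.castAdd p b))) *
          T (fun b => Fin.cast h (σ (Fin.natAdd m b))) (fun b => Fin.cast h (τ (Fin.natAdd m b))))
        = ∑ σ : Equiv.Perm (Fin (m + p)), ∑ τ : Equiv.Perm (Fin (m + p)),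
            ∑ π : Equiv.Perm (Fin m), (m.factorial : ℝ) *
            (((Equiv.Perm.sign σ : ℤ) : ℝ) * ((Equiv.Perm.sign τ : ℤ) : ℝ) * sgn π *
              (∏ a : Fin m, (if σ (Fin.castAdd p a) = τ (Fin.castAdd p (π a)) then (1:ℝ) else 0)) *
              T (fun b => Fin.cast h (σ (Fin.natAdd m b))) (fun b => Fin.cast h (τ (Fin.natAdd m b)))) := by
          refine Finset.sum_congr rfl fun σ _ => Finset.sum_congr rfl fun τ _ => ?_
          rw [gpow_eq]
          unfold Ddet
          simp only [fin_cast_inj]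
          simp only [Finset.mul_sum, Finset.sum_mul]
          exact Finset.sum_congr rfl fun π _ => by ring
      _ = ∑ σ : Equiv.Perm (Fin (m + p)), ∑ π : Equiv.Perm (Fin m),
            ∑ τ : Equiv.Perm (Fin (m + p)), (m.factorial : ℝ) *
            (((Equiv.Perm.sign σ : ℤ) : ℝ) * ((Equiv.Perm.sign τ : ℤ) : ℝ) * sgn π *
              (∏ a : Fin m, (if σ (Fin.castAdd p a) = τ (Fin.castAdd p (π a)) then (1:ℝ) else 0)) *
              T (fun b => Fin.cast h (σ (Fin.natAdd m b))) (fun b => Fin.cast h (τ (Fin.natAdd m b)))) :=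
          Finset.sum_congr rfl fun σ _ => Finset.sum_comm
      _ = ∑ σ : Equiv.Perm (Fin (m + p)), ∑ _π : Equiv.Perm (Fin m),
            ∑ ρ : Equiv.Perm (Fin (m + p)), (m.factorial : ℝ) *
            (sgn ρ *
              (∏ a : Fin m, (if σ (Fin.castAdd p a) = ρ (σ (Fin.castAdd p a)) then (1:ℝ) else 0)) *
              T (fun b => Fin.cast h (σ (Fin.natAdd m b))) (fun b => Fin.cast h (ρ (σ (Fin.natAdd m b))))) := by
          refine Finset.sum_congr rfl fun σ _ => Finset.sum_congr rfl fun π _ => ?_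
          refine Eq.symm (Fintype.sum_bijective
            (fun ρ : Equiv.Perm (Fin (m + p)) =>
              ρ * (σ * (blk π (1 : Equiv.Perm (Fin p)))⁻¹))
            (Group.mulRight_bijective _) _ _ (fun ρ => ?_))
          have hca : ∀ a : Fin m, Fin.castAdd p (π a)
              = blk π (1 : Equiv.Perm (Fin p)) (Fin.castAdd p a) :=
            fun a => (blk_castAdd π 1 a).symm
          simp only [hca]
          have hmulπ : ∀ x : Fin (m + p),
              (ρ * (σ * (blk π (1 : Equiv.Perm (Fin p)))⁻¹))
                (blk π (1 : Equiv.Perm (Fin p)) x) = ρ (σ x) := fun x => by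
            simp [Equiv.Perm.mul_apply]
          simp only [hmulπ]
          have hmuln : ∀ b : Fin p,
              (ρ * (σ * (blk π (1 : Equiv.Perm (Fin p)))⁻¹)) (Fin.natAdd m b)
                = ρ (σ (Fin.natAdd m b)) := by
            intro b
            have hfix : (blk π (1 : Equiv.Perm (Fin p)))⁻¹ (Fin.natAdd m b)
                = Fin.natAdd m b := by
              rw [Equiv.Perm.inv_eq_iff_eq, blk_natAdd]
              simp
            simp [Equiv.Perm.mul_apply, hfix]
          simp only [hmuln]
          simp only [map_mul, map_inv, sign_blk_u, map_one, mul_one, Int.units_inv_eq_self]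
          rcases Int.units_eq_one_or (Equiv.Perm.sign σ) with h7 | h7 <;>
            rcases Int.units_eq_one_or (Equiv.Perm.sign π) with h8 | h8 <;>
              simp only [sgn, h7, h8] <;> push_cast <;> ring
      _ = ∑ σ : Equiv.Perm (Fin (m + p)), (m.factorial : ℝ) *
            ((m.factorial : ℝ) * ((p.factorial : ℝ) * T (fun b => Fin.cast h (σ (Fin.natAdd m b))) (fun b => Fin.cast h (σ (Fin.natAdd m b))))) := by
          refine Finset.sum_congr rfl fun σ _ => ?_
          have hin : (∑ ρ : Equiv.Perm (Fin (m + p)), (m.factorial : ℝ) *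
              (sgn ρ *
                (∏ a : Fin m, (if σ (Fin.castAdd p a) = ρ (σ (Fin.castAdd p a)) then (1:ℝ) else 0)) *
                T (fun b => Fin.cast h (σ (Fin.natAdd m b))) (fun b => Fin.cast h (ρ (σ (Fin.natAdd m b))))))
              = (m.factorial : ℝ) * ((p.factorial : ℝ) * T (fun b => Fin.cast h (σ (Fin.natAdd m b))) (fun b => Fin.cast h (σ (Fin.natAdd m b)))) := by
            rw [← Finset.mul_sum, sum_rho h T hT σ]
          rw [Finset.sum_congr rfl fun π _ => hin, Finset.sum_const, Finset.card_univ,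
            Fintype.card_perm, Fintype.card_fin, nsmul_eq_mul]
      _ = (m.factorial : ℝ) * (m.factorial : ℝ) * (m.factorial : ℝ) * (p.factorial : ℝ) *
            ∑ K : Fin p → Fin n, T K K := by
          have hdiag : ∀ σ : Equiv.Perm (Fin (m + p)), (m.factorial : ℝ) *
              ((m.factorial : ℝ) * ((p.factorial : ℝ) * T (fun b => Fin.cast h (σ (Fin.natAdd m b))) (fun b => Fin.cast h (σ (Fin.natAdd m b)))))
              = ((m.factorial : ℝ) * (m.factorial : ℝ) * (p.factorial : ℝ)) *
                T (fun b => Fin.cast h (σ (Fin.natAdd m b))) (fun b => Fin.cast h (σ (Fin.natAdd m b))) := fun σ => by ring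
          rw [Finset.sum_congr rfl fun σ _ => hdiag σ, ← Finset.mul_sum,
            sum_sigma_diag h T hT]
          ring
  rw [calc1]
  have hmf : (m.factorial : ℝ) ≠ 0 := Nat.cast_ne_zero.mpr (Nat.factorial_ne_zero m)
  have hpf : (p.factorial : ℝ) ≠ 0 := Nat.cast_ne_zero.mpr (Nat.factorial_ne_zero p)
  push_cast
  field_simp
  try ring

lemma alt2_cast' {p q p' q' : ℕ} (hp : p = p') (hq : q = q') (ω : DForm n p q)
    (hω : Alt2 ω) : Alt2 (DForm.cast' hp hq ω) := by
  subst hp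
  subst hq
  have hcc : DForm.cast' rfl rfl ω = ω := by
    funext I J
    show ω (fun a => I (Fin.cast rfl a)) (fun b => J (Fin.cast rfl b)) = ω I J
    have hI : (fun a => I (Fin.cast rfl a)) = I := funext fun a => congrArg I (Fin.ext rfl)
    have hJ : (fun b => J (Fin.cast rfl b)) = J := funext fun b => congrArg J (Fin.ext rfl)
    rw [hI, hJ]
  rw [hcc]
  exact hω

lemma cast_append_eq (K : Fin n → Fin n) (I : Fin (n - n) → Fin n) (h : n = n + (n - n)) :
    (fun a : Fin n => Fin.append K I (Fin.cast h a)) = K := by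
  funext a
  have h2 : Fin.cast h a = Fin.castAdd (n - n) a := Fin.ext rfl
  rw [h2, Fin.append_left]

lemma epsSign_top (K : Fin n → Fin n) (I : Fin (n - n) → Fin n) :
    DForm.epsSign (le_refl n) K I =
      if h : Function.Bijective K then ((Equiv.Perm.sign (Equiv.ofBijective K h) : ℤ) : ℝ)
      else 0 := by
  rw [DForm.epsSign]
  simp only [cast_append_eq]

lemma sum_eps (f : (Fin n → Fin n) → ℝ)
    (hf : ∀ s : Equiv.Perm (Fin n), f ⇑s = sgn s * f id) :
    (∑ K : Fin n → Fin n, (if h : Function.Bijective K then ((Equiv.Perm.sign (Equiv.ofBijective K h) : ℤ) : ℝ) else 0) * f K) = (n.factorial : ℝ) * f id := by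
  have e1 := Finset.sum_filter_of_ne (s := (Finset.univ : Finset (Fin n → Fin n)))
    (p := fun K => Function.Bijective K)
    (f := fun K => (if h : Function.Bijective K then ((Equiv.Perm.sign (Equiv.ofBijective K h) : ℤ) : ℝ) else 0) * f K)
    (fun K _ hne => by
      by_contra hb
      exact hne (by beta_reduce; rw [dif_neg hb, zero_mul]))
  rw [← e1]
  have e2 : (∑ s : Equiv.Perm (Fin n),
      (if h : Function.Bijective ⇑s then
          ((Equiv.Perm.sign (Equiv.ofBijective ⇑s h) : ℤ) : ℝ) else 0) * f ⇑s)
      = ∑ K ∈ Finset.univ.filter (fun K => Function.Bijective K), (if h : Function.Bijective K then ((Equiv.Perm.sign (Equiv.ofBijective K h) : ℤ) : ℝ) else 0) * f K :=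
    Finset.sum_bij (fun s _ => ⇑s)
      (fun s _ => Finset.mem_filter.mpr ⟨Finset.mem_univ _, s.bijective⟩)
      (fun s₁ _ s₂ _ h => Equiv.coe_fn_injective h)
      (fun K hK => ⟨Equiv.ofBijective K (Finset.mem_filter.mp hK).2, Finset.mem_univ _, rfl⟩)
      (fun s _ => rfl)
  rw [← e2]
  have e3 : ∀ s : Equiv.Perm (Fin n),
      (if h : Function.Bijective ⇑s then
          ((Equiv.Perm.sign (Equiv.ofBijective ⇑s h) : ℤ) : ℝ) else 0) * f ⇑s = f id := by
    intro s
    rw [dif_pos s.bijective]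
    have h4 : Equiv.ofBijective ⇑s s.bijective = s := Equiv.ext fun x => rfl
    rw [h4, hf s, ← mul_assoc,
      show ((Equiv.Perm.sign s : ℤ) : ℝ) * sgn s = 1 from sgn_sq s, one_mul]
  rw [Finset.sum_congr rfl fun s _ => e3 s, Finset.sum_const, Finset.card_univ,
    Fintype.card_perm, Fintype.card_fin, nsmul_eq_mul]

lemma hstar_top (ω : DForm n n n) (hω : Alt2 ω)
    (I0 J0 : Fin (n - n) → Fin n) :
    DForm.hstar (le_refl n) (le_refl n) ω I0 J0 = ω id id := by
  rw [DForm.hstar]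
  simp only [epsSign_top]
  have inner : ∀ K : Fin n → Fin n,
      (∑ L : Fin n → Fin n, (if h : Function.Bijective K then ((Equiv.Perm.sign (Equiv.ofBijective K h) : ℤ) : ℝ) else 0) * (if h : Function.Bijective L then ((Equiv.Perm.sign (Equiv.ofBijective L h) : ℤ) : ℝ) else 0) * ω K L)
      = (if h : Function.Bijective K then ((Equiv.Perm.sign (Equiv.ofBijective K h) : ℤ) : ℝ) else 0) * ((n.factorial : ℝ) * ω K id) := by
    intro K
    rw [show (∑ L : Fin n → Fin n, (if h : Function.Bijective K then ((Equiv.Perm.sign (Equiv.ofBijective K h) : ℤ) : ℝ) else 0) * (if h : Function.Bijective L then ((Equiv.Perm.sign (Equiv.ofBijective L h) : ℤ) : ℝ) else 0) * ω K L)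
        = (if h : Function.Bijective K then ((Equiv.Perm.sign (Equiv.ofBijective K h) : ℤ) : ℝ) else 0) * ∑ L : Fin n → Fin n, (if h : Function.Bijective L then ((Equiv.Perm.sign (Equiv.ofBijective L h) : ℤ) : ℝ) else 0) * ω K L from by
      rw [Finset.mul_sum]; exact Finset.sum_congr rfl fun L _ => by ring]
    congr 1
    refine sum_eps (fun L => ω K L) (fun t => ?_)
    have h := hω.2 t K id
    rwa [Function.id_comp] at h
  rw [Finset.sum_congr rfl fun K _ => inner K]
  rw [sum_eps (fun K => (n.factorial : ℝ) * ω K id) (fun t => by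
    have h := hω.1 t id id
    rw [Function.id_comp] at h
    show (n.factorial : ℝ) * ω ⇑t id = sgn t * ((n.factorial : ℝ) * ω id id)
    rw [h]; ring)]
  have hfact : (n.factorial : ℝ) ≠ 0 := Nat.cast_ne_zero.mpr (Nat.factorial_ne_zero n)
  push_cast
  field_simp
  try ring

end GBAux
end

/-- For an algebraic curvature tensor `R` and `2q ≤ n`, the
Gauss-Bonnet curvature admits the two equivalent expressions
`(1/(n-2q)!)·*(g^{n-2q}·R^q) = (1/(2q)!)·c^{2q}(R^q)`. -/
theorem gauss_bonnet_two_expressions {n q : ℕ} (hq : 2 * q ≤ n)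
    (R : DForm n 2 2) (h1 : DForm.IsAlt R) (h2 : DForm.IsSym R)
    (h3 : DForm.Bianchi1 R) :
    (((n - 2 * q).factorial : ℝ))⁻¹ *
        DForm.cast' (by omega) (by omega)
          (DForm.hstar (n := n) (p := n) (q := n) (le_refl n) (le_refl n)
            (DForm.cast' (by omega) (by omega)
              (DForm.mul (DForm.gpow (n - 2 * q)) (DForm.pow R q))))
          Fin.elim0 Fin.elim0 =
      (((2 * q).factorial : ℝ))⁻¹ * DForm.fullc (DForm.pow R q) := by
  classical
  have hT := GBAux.alt2_pow R q
  rw [DForm.cast']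
  beta_reduce
  rw [GBAux.hstar_top _ (GBAux.alt2_cast' _ _ _ (GBAux.alt2_mul _ _))]
  rw [DForm.cast']
  beta_reduce
  simp only [id_eq]
  rw [GBAux.mul_gpow_eval _ _ _ hT]
  rw [← GBAux.fullc_eq (DForm.pow R q)]
  have hmf : ((n - 2 * q).factorial : ℝ) ≠ 0 :=
    Nat.cast_ne_zero.mpr (Nat.factorial_ne_zero _)
  have hpf : (((2 * q).factorial : ℝ)) ≠ 0 :=
    Nat.cast_ne_zero.mpr (Nat.factorial_ne_zero _)
  field_simp
  try ring
end
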